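/- arXiv:2207.11656 — 7 statements merged into one kernel-verified Lean document; each statement's English description precedes it below -/
import Mathlib

section
/- Under Assumption 1 (linear price sensitivity), for any pricing policy (p_i)_{i≥0} with p_0 = p_max making the server birth–death chain positive recurrent (i.e., ∑_j h_j < ∞), the average stationary price satisfies ∑_{i≥0} π_i p_i = (β − π_0 μ_0 − λ)/α, where μ_0 = g(p_max) = β − α p_max. Consequently, C_rel = (β − π_0 μ_0 − λ)/α − w ∑_{i≥1} i π_i. -/
/-- `hseq ρ i = ∏_{j=1}^i ρ_j`, with `hseq ρ 0 = 1`. -/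
noncomputable def hseq (ρ : ℕ → ℝ) (i : ℕ) : ℝ := ∏ j ∈ Finset.Icc 1 i, ρ j

/-- Stationary distribution `π_i = h_i / ∑_j h_j` of the birth–death chain. -/
noncomputable def piseq (ρ : ℕ → ℝ) (i : ℕ) : ℝ := hseq ρ i / ∑' j, hseq ρ j

/-- Under Assumption 1 (linear price sensitivity `g(p) = β - αp`,
with `μ_max = β - α p_min > λ` and `μ_min = β - α p_max > 0`), for any pricing
policy `(p_i)` with values in `[p_min, p_max]`, `p_0 = p_max`, making the server
birth–death chain (with `μ_i = g(p_i)`, `ρ_i = λ/μ_i`) positive recurrent,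
the average stationary price satisfies
`∑_i π_i p_i = (β - π_0 μ_0 - λ)/α`, and consequently
`C_rel = (β - π_0 μ_0 - λ)/α - w ∑_i i π_i` where `w = w̃/λ`. -/
theorem stmt0
    (lam alpha beta wt pmin pmax : ℝ)
    (hlam : 0 < lam) (halpha : 0 < alpha) (hbeta : 0 < beta) (hwt : 0 < wt)
    (hpmin : 0 < pmin) (hpminmax : pmin < pmax)
    (hmumax : lam < beta - alpha * pmin)
    (hmumin : 0 < beta - alpha * pmax)
    (p : ℕ → ℝ)
    (hp : ∀ i, p i ∈ Set.Icc pmin pmax)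
    (hp0 : p 0 = pmax)
    (μ : ℕ → ℝ) (hμ : ∀ i, μ i = beta - alpha * p i)
    (ρ : ℕ → ℝ) (hρ : ∀ i, ρ i = lam / μ i)
    (hsum : Summable (hseq ρ)) :
    (∑' i, piseq ρ i * p i) = (beta - piseq ρ 0 * μ 0 - lam) / alpha ∧
    (∑' i, piseq ρ i * p i) - (wt / lam) * (∑' i : ℕ, (i : ℝ) * piseq ρ i)
      = (beta - piseq ρ 0 * μ 0 - lam) / alpha
          - (wt / lam) * (∑' i : ℕ, (i : ℝ) * piseq ρ i) := by

  have hμpos : ∀ i, 0 < μ i := by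
    intro i
    have h2 := (hp i).2
    rw [hμ i]
    nlinarith
  have hhpos : ∀ i, 0 < hseq ρ i := by
    intro i
    induction i with
    | zero => simp [hseq]
    | succ n ih =>
      rw [hseq, Finset.prod_Icc_succ_top (Nat.succ_le_succ (Nat.zero_le n))]
      exact mul_pos ih (by rw [hρ]; exact div_pos hlam (hμpos _))
  have h0 : hseq ρ 0 = 1 := by simp [hseq]
  have hSpos : 0 < ∑' j, hseq ρ j :=
    Summable.tsum_pos hsum (fun i => (hhpos i).le) 0 (hhpos 0)
  have hsucc : ∀ i, hseq ρ (i+1) = hseq ρ i * ρ (i+1) := by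
    intro i
    rw [hseq, Finset.prod_Icc_succ_top (Nat.succ_le_succ (Nat.zero_le i))]
    rfl
  have hkey : ∀ i, hseq ρ (i+1) * μ (i+1) = lam * hseq ρ i := by
    intro i
    rw [hsucc i, hρ (i+1), mul_assoc, div_mul_cancel₀ _ (hμpos (i+1)).ne']
    ring
  have hsum_hμ : Summable (fun i => hseq ρ i * μ i) := by
    apply Summable.of_nonneg_of_le
      (fun i => (mul_pos (hhpos i) (hμpos i)).le)
      (fun i => ?_) (hsum.mul_right beta)
    have : μ i ≤ beta := by
      have h1 := (hp i).1
      rw [hμ i]; nlinarith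
    exact mul_le_mul_of_nonneg_left this (hhpos i).le
  have hsum_hp : Summable (fun i => hseq ρ i * p i) := by
    apply Summable.of_nonneg_of_le
      (fun i => (mul_pos (hhpos i) (lt_of_lt_of_le hpmin (hp i).1)).le)
      (fun i => mul_le_mul_of_nonneg_left (hp i).2 (hhpos i).le)
      (hsum.mul_right pmax)
  have hT : (∑' i, hseq ρ i * μ i) = μ 0 + lam * ∑' j, hseq ρ j := by
    rw [Summable.tsum_eq_zero_add hsum_hμ, h0, one_mul]
    congr 1
    calc (∑' i, hseq ρ (i+1) * μ (i+1)) = ∑' i, lam * hseq ρ i :=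
          tsum_congr hkey
      _ = lam * ∑' j, hseq ρ j := tsum_mul_left
  have hHP : (∑' i, hseq ρ i * p i)
      = (beta * (∑' j, hseq ρ j) - (μ 0 + lam * ∑' j, hseq ρ j)) / alpha := by
    rw [← hT]
    have hcg : ∀ i, hseq ρ i * p i = (hseq ρ i * beta - hseq ρ i * μ i) / alpha := by
      intro i
      rw [hμ i]
      field_simp
      ring
    rw [tsum_congr hcg, tsum_div_const,
      Summable.tsum_sub (hsum.mul_right beta) hsum_hμ, tsum_mul_right]
    ring_nf
  have hfinal : (∑' i, piseq ρ i * p i) = (beta - piseq ρ 0 * μ 0 - lam) / alpha := by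
    have hcg : ∀ i, piseq ρ i * p i = hseq ρ i * p i / ∑' j, hseq ρ j := by
      intro i; rw [piseq]; ring
    rw [tsum_congr hcg, tsum_div_const, hHP, piseq, h0]
    field_simp
    ring
  exact ⟨hfinal, by rw [hfinal]⟩
end

section
/- Under Assumption 1 (linear price sensitivity), there exists a pricing policy maximizing the relaxed objective C_rel over all positive-recurrent policies (p_i)_{i≥1} with values in [p_min, p_max] (and p_0 = p_max) that has bang-bang form: there exist ℓ* ∈ ℕ ∪ {∞} and p* ∈ [p_min, p_max] such that p_i = p_max for i < ℓ*, p_i = p* for i = ℓ*, and p_i = p_min for i > ℓ*. -/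
open scoped ENNReal

/-- The death-rate ratios induced by a pricing policy under linear price
sensitivity: `ρ_i = λ / (β - α p_i)`. -/
noncomputable def rhoOf (lam beta alpha : ℝ) (p : ℕ → ℝ) (i : ℕ) : ℝ :=
  lam / (beta - alpha * p i)

/-- The relaxed objective `C_rel = ∑_i π_i p_i - (w̃/λ) ∑_i i π_i`, valued in
`EReal` so that a policy with infinite stationary mean gets value `⊥`. -/
noncomputable def CrelE (lam beta alpha wt : ℝ) (p : ℕ → ℝ) : EReal :=
  ((∑' i, piseq (rhoOf lam beta alpha p) i * p i : ℝ) : EReal) -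
    ((ENNReal.ofReal (wt / lam) *
      ∑' i : ℕ, ENNReal.ofReal ((i : ℝ) * piseq (rhoOf lam beta alpha p) i)
        : ℝ≥0∞) : EReal)

/-- Admissible (positive recurrent) pricing policies: prices in
`[p_min, p_max]`, `p_0 = p_max`, and `∑_j h_j < ∞`. -/
def Admissible (lam beta alpha pmin pmax : ℝ) (p : ℕ → ℝ) : Prop :=
  (∀ i, p i ∈ Set.Icc pmin pmax) ∧ p 0 = pmax ∧
    Summable (hseq (rhoOf lam beta alpha p))

/-- a-tail continuation value. -/
noncomputable def Wa (a w pmin M : ℝ) (k : ℕ) : ℝ :=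
  a/(1-a) * (pmin - w*k - M) - w*a^2/(1-a)^2

/-- backward recursion through the b-region; `WfAux ℓ m = W (ℓ+1-m)`. -/
noncomputable def WfAux (a b w pmin pmax M : ℝ) (ℓ : ℕ) : ℕ → ℝ
  | 0 => Wa a w pmin M (ℓ+1)
  | (m+1) => b*(pmax - w*((ℓ:ℝ)-(m:ℝ)) - M + WfAux a b w pmin pmax M ℓ m)

/-- value-to-go of the threshold-ℓ policy. -/
noncomputable def Wf (a b w pmin pmax M : ℝ) (ℓ k : ℕ) : ℝ :=
  if ℓ < k then Wa a w pmin M k else WfAux a b w pmin pmax M ℓ (ℓ+1-k)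

noncomputable def kapAux (a b : ℝ) : ℕ → ℝ
  | 0 => a/(1-a)
  | (m+1) => b*(1 + kapAux a b m)

noncomputable def kap (a b : ℝ) (ℓ k : ℕ) : ℝ :=
  if ℓ < k then a/(1-a) else kapAux a b (ℓ+1-k)

/-- candidate optimal value for threshold ℓ. -/
noncomputable def Mval (a b w pmin pmax : ℝ) (ℓ : ℕ) : ℝ :=
  (pmax + Wf a b w pmin pmax 0 ℓ 1) / (1 + kap a b ℓ 1)

section Alg
variable {a b w pmin pmax M M' : ℝ}

lemma Wa_rec (ha : a ≠ 1) (k : ℕ) :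
    Wa a w pmin M k = a*(pmin - w*k - M + Wa a w pmin M (k+1)) := by
  have h1a : (1:ℝ) - a ≠ 0 := sub_ne_zero.mpr (Ne.symm ha)
  unfold Wa
  push_cast
  field_simp
  ring

lemma Wf_rec (ha : a ≠ 1) (ℓ : ℕ) {k : ℕ} (hk : 1 ≤ k) :
    Wf a b w pmin pmax M ℓ k =
      if k ≤ ℓ then b*(pmax - w*k - M + Wf a b w pmin pmax M ℓ (k+1))
      else a*(pmin - w*k - M + Wf a b w pmin pmax M ℓ (k+1)) := by
  rcases le_or_gt k ℓ with h | h
  · rw [if_pos h]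
    have h1 : ¬ ℓ < k := not_lt.mpr h
    have h2 : ℓ + 1 - k = (ℓ - k) + 1 := by omega
    rw [Wf, if_neg h1, h2, WfAux]
    have h3 : ((ℓ:ℝ) - ((ℓ - k : ℕ):ℝ)) = (k:ℝ) := by
      have : ((ℓ - k : ℕ):ℝ) = (ℓ:ℝ) - (k:ℝ) := by
        push_cast [Nat.cast_sub h]; ring
      rw [this]; ring
    rw [h3]
    congr 2
    rcases le_or_gt (k+1) ℓ with h4 | h4
    · rw [Wf, if_neg (not_lt.mpr h4)]
      congr 1; omega
    · have h5 : k = ℓ := by omega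
      rw [Wf, if_pos (by omega : ℓ < k+1)]
      have : ℓ - k = 0 := by omega
      rw [this, WfAux, h5]
  · rw [if_neg (not_le.mpr h), Wf, if_pos h, Wf, if_pos (by omega : ℓ < k+1)]
    exact Wa_rec ha k

lemma Wa_affine (k : ℕ) :
    Wa a w pmin M k - Wa a w pmin M' k = (M' - M) * (a/(1-a)) := by
  unfold Wa; ring

lemma WfAux_affine (ℓ : ℕ) (m : ℕ) :
    WfAux a b w pmin pmax M ℓ m - WfAux a b w pmin pmax M' ℓ m
      = (M' - M) * kapAux a b m := by
  induction m with
  | zero =>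
      show Wa a w pmin M (ℓ+1) - Wa a w pmin M' (ℓ+1) = (M' - M) * (a/(1-a))
      exact Wa_affine _
  | succ m ih => simp only [WfAux, kapAux]; linear_combination b * ih

lemma Wf_affine (ℓ k : ℕ) :
    Wf a b w pmin pmax M ℓ k - Wf a b w pmin pmax M' ℓ k
      = (M' - M) * kap a b ℓ k := by
  unfold Wf kap
  split
  · exact Wa_affine k
  · exact WfAux_affine ℓ _

lemma kapAux_pos (ha0 : 0 < a) (ha1 : a < 1) (hb : 0 < b) (m : ℕ) :
    0 < kapAux a b m := by
  induction m with
  | zero => rw [kapAux]; exact div_pos ha0 (by linarith)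
  | succ m ih => rw [kapAux]; nlinarith

lemma kap_pos (ha0 : 0 < a) (ha1 : a < 1) (hb : 0 < b) (ℓ k : ℕ) :
    0 < kap a b ℓ k := by
  unfold kap; split
  · exact div_pos ha0 (by linarith)
  · exact kapAux_pos ha0 ha1 hb _

/-- Master identity. -/
lemma master (ha0 : 0 < a) (ha1 : a < 1) (hb : 0 < b) (ℓ : ℕ) (M : ℝ) :
    (pmax - M) + Wf a b w pmin pmax M ℓ 1
      = (Mval a b w pmin pmax ℓ - M) * (1 + kap a b ℓ 1) := by
  have hk := kap_pos (a := a) (b := b) ha0 ha1 hb ℓ 1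
  have h1 : Wf a b w pmin pmax M ℓ 1
      = Wf a b w pmin pmax 0 ℓ 1 - M * kap a b ℓ 1 := by
    have := Wf_affine (a := a) (b := b) (w := w) (pmin := pmin) (pmax := pmax)
      (M := M) (M' := 0) ℓ 1
    linarith
  have h2 : Mval a b w pmin pmax ℓ * (1 + kap a b ℓ 1)
      = pmax + Wf a b w pmin pmax 0 ℓ 1 := by
    rw [Mval, div_mul_cancel₀]
    positivity
  rw [h1]; nlinarith [h2]

end Alg

noncomputable def cfun (a b w pmin pmax beta' M : ℝ) (ℓ k : ℕ) : ℝ :=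
  beta' - w*k - M + Wf a b w pmin pmax M ℓ (k+1)

noncomputable def cA (a w pmin beta' M : ℝ) (k : ℕ) : ℝ :=
  beta' - w*k - M + Wa a w pmin M (k+1)

section Layer2
variable {a b w pmin pmax beta' lam' M : ℝ}

lemma cfun_eq_cA (ℓ k : ℕ) (h : ℓ ≤ k) :
    cfun a b w pmin pmax beta' M ℓ k = cA a w pmin beta' M k := by
  rw [cfun, cA, Wf, if_pos (by omega : ℓ < k + 1)]

lemma cA_succ (ha : a ≠ 1) (k : ℕ) :
    cA a w pmin beta' M (k+1) = cA a w pmin beta' M k - w/(1-a) := by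
  have h1a : (1:ℝ) - a ≠ 0 := sub_ne_zero.mpr (Ne.symm ha)
  unfold cA Wa
  push_cast
  field_simp
  ring

lemma c_rec (ha : a ≠ 1) (hpa : a*beta' - lam' = a*pmin) (hpb : b*beta' - lam' = b*pmax)
    (ℓ k : ℕ) :
    cfun a b w pmin pmax beta' M ℓ k
      = (if k+1 ≤ ℓ then b else a) * cfun a b w pmin pmax beta' M ℓ (k+1)
        + (beta' - lam' - M - w*k) := by
  rw [cfun, Wf_rec ha ℓ (by omega : 1 ≤ k+1)]
  rcases le_or_gt (k+1) ℓ with h | h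
  · rw [if_pos h, if_pos h, cfun]
    push_cast
    linear_combination -hpb
  · rw [if_neg (not_le.mpr h), if_neg (not_le.mpr h), cfun]
    push_cast
    linear_combination -hpa

lemma Wf_eq_c (ha : a ≠ 1) (hpa : a*beta' - lam' = a*pmin) (hpb : b*beta' - lam' = b*pmax)
    (ℓ : ℕ) {k : ℕ} (hk : 1 ≤ k) :
    Wf a b w pmin pmax M ℓ k
      = (if k ≤ ℓ then b else a) * cfun a b w pmin pmax beta' M ℓ k - lam' := by
  rw [Wf_rec ha ℓ hk, cfun]
  rcases le_or_gt k ℓ with h | h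
  · rw [if_pos h, if_pos h]; linear_combination -hpb
  · rw [if_neg (not_le.mpr h), if_neg (not_le.mpr h)]; linear_combination -hpa

/-- nonpositivity of `c` above the threshold. -/
lemma c_nonpos (ha0 : 0 < a) (ha1 : a < 1) (hw : 0 < w) (ℓ : ℕ)
    (h0 : cA a w pmin beta' M (ℓ+1) ≤ 0) :
    ∀ k, ℓ+1 ≤ k → cfun a b w pmin pmax beta' M ℓ k ≤ 0 := by
  have key : ∀ m, cA a w pmin beta' M (ℓ+1+m) ≤ 0 := by
    intro m
    induction m with
    | zero => exact h0
    | succ m ih =>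
        have := cA_succ (a := a) (w := w) (pmin := pmin) (beta' := beta') (M := M)
          (ne_of_lt ha1) (ℓ+1+m)
        have hpos : 0 < w/(1-a) := div_pos hw (by linarith)
        have h2 : ℓ+1+(m+1) = (ℓ+1+m)+1 := by omega
        rw [h2, this]
        linarith
  intro k hk
  rw [cfun_eq_cA _ _ (by omega)]
  have : k = ℓ+1+(k-(ℓ+1)) := by omega
  rw [this]
  exact key _

/-- nonnegativity of `c` below the threshold. -/
lemma c_nonneg (ha0 : 0 < a) (ha1 : a < 1) (hb : 0 < b) (hw : 0 < w)
    (hpa : a*beta' - lam' = a*pmin) (hpb : b*beta' - lam' = b*pmax) (ℓ : ℕ)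
    (h0 : cA a w pmin beta' M (ℓ+1) ≤ 0) (h1 : 0 ≤ cA a w pmin beta' M ℓ) :
    ∀ k, 1 ≤ k → k ≤ ℓ → 0 ≤ cfun a b w pmin pmax beta' M ℓ k := by
  have ha : a ≠ 1 := ne_of_lt ha1
  -- d_ℓ ≥ 0
  have hrecl := c_rec (a := a) (b := b) (w := w) (pmin := pmin) (pmax := pmax)
    (beta' := beta') (lam' := lam') (M := M) ha hpa hpb ℓ ℓ
  rw [if_neg (by omega), cfun_eq_cA _ _ le_rfl, cfun_eq_cA _ _ (by omega)] at hrecl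
  have hd : 0 ≤ beta' - lam' - M - w*ℓ := by nlinarith
  -- downward induction
  have key : ∀ m k, k + m = ℓ → 1 ≤ k → 0 ≤ cfun a b w pmin pmax beta' M ℓ k := by
    intro m
    induction m with
    | zero =>
        intro k hk _
        have : k = ℓ := by omega
        subst this
        rw [cfun_eq_cA _ _ le_rfl]
        exact h1
    | succ m ih =>
        intro k hk hk1
        have hrec := c_rec (a := a) (b := b) (w := w) (pmin := pmin) (pmax := pmax)
          (beta' := beta') (lam' := lam') (M := M) ha hpa hpb ℓ k
        rw [if_pos (by omega)] at hrec
        have hc1 : 0 ≤ cfun a b w pmin pmax beta' M ℓ (k+1) := ih (k+1) (by omega) (by omega)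
        have hdk : 0 ≤ beta' - lam' - M - w*k := by
          have : (k:ℝ) ≤ (ℓ:ℝ) := by exact_mod_cast Nat.le_of_lt_succ (by omega)
          nlinarith
        nlinarith
  intro k hk hkl
  exact key (ℓ - k) k (by omega) hk

/-- neighbor identity: effect of raising the threshold by one. -/
lemma Wf_succ (ha0 : 0 < a) (ha1 : a < 1)
    (hpa : a*beta' - lam' = a*pmin) (hpb : b*beta' - lam' = b*pmax) (ℓ : ℕ) :
    Wf a b w pmin pmax M (ℓ+1) 1
      = Wf a b w pmin pmax M ℓ 1 + b^ℓ*(b-a)*(cA a w pmin beta' M (ℓ+1)) := by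
  have ha : a ≠ 1 := ne_of_lt ha1
  have key : ∀ j k, k + j = ℓ + 1 → 1 ≤ k →
      Wf a b w pmin pmax M (ℓ+1) k - Wf a b w pmin pmax M ℓ k
        = b^j*(b-a)*(cA a w pmin beta' M (ℓ+1)) := by
    intro j
    induction j with
    | zero =>
        intro k hk _
        have hkeq : k = ℓ + 1 := by omega
        subst hkeq
        rw [Wf_rec ha (ℓ+1) (by omega : 1 ≤ ℓ+1), if_pos le_rfl]
        have h2 : Wf a b w pmin pmax M (ℓ+1) (ℓ+1+1) = Wa a w pmin M (ℓ+1+1) := by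
          rw [Wf, if_pos (by omega)]
        have h3 : Wf a b w pmin pmax M ℓ (ℓ+1) = Wa a w pmin M (ℓ+1) := by
          rw [Wf, if_pos (by omega)]
        rw [h2, h3, Wa_rec ha (ℓ+1)]
        have h4 : Wa a w pmin M (ℓ+1+1) = Wa a w pmin M (ℓ+2) := by norm_num
        rw [h4, cA]
        push_cast
        linear_combination hpa - hpb
    | succ j ih =>
        intro k hk hk1
        have h1 : Wf a b w pmin pmax M (ℓ+1) k
            = b*(pmax - w*k - M + Wf a b w pmin pmax M (ℓ+1) (k+1)) := by
          rw [Wf_rec ha (ℓ+1) hk1, if_pos (by omega)]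
        have h2 : Wf a b w pmin pmax M ℓ k
            = b*(pmax - w*k - M + Wf a b w pmin pmax M ℓ (k+1)) := by
          rw [Wf_rec ha ℓ hk1, if_pos (by omega)]
        have h3 := ih (k+1) (by omega) (by omega)
        rw [h1, h2]
        rw [pow_succ]
        linear_combination b * h3
  have := key ℓ 1 (by omega) le_rfl
  linarith

/-- unrolling `Wf` through the b-region. -/
lemma Wf_unroll (ha0 : 0 < a) (ha1 : a < 1) (ℓ : ℕ) :
    ∀ j, j ≤ ℓ → Wf a b w pmin pmax M ℓ 1
      = (∑ k ∈ Finset.Icc 1 j, b^k*(pmax - w*k - M)) + b^j * Wf a b w pmin pmax M ℓ (j+1) := by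
  have ha : a ≠ 1 := ne_of_lt ha1
  intro j
  induction j with
  | zero => simp
  | succ j ih =>
      intro hj
      rw [ih (by omega), Wf_rec ha ℓ (by omega : 1 ≤ j+1), if_pos hj,
        Finset.sum_Icc_succ_top (by omega : 1 ≤ j+1)]
      push_cast
      ring

end Layer2

section Layer3
variable {a b w pmin pmax beta' lam' M : ℝ}

lemma hseq_zero (ρ : ℕ → ℝ) : hseq ρ 0 = 1 := by simp [hseq]

lemma hseq_succ (ρ : ℕ → ℝ) (n : ℕ) : hseq ρ (n+1) = hseq ρ n * ρ (n+1) :=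
  Finset.prod_Icc_succ_top (by omega) ρ

lemma hseq_pos (ρ : ℕ → ℝ) (hρ : ∀ i, 1 ≤ i → 0 < ρ i) (n : ℕ) : 0 < hseq ρ n := by
  induction n with
  | zero => rw [hseq_zero]; norm_num
  | succ n ih => rw [hseq_succ]; exact mul_pos ih (hρ _ (by omega))

lemma Wf_growth (ha0 : 0 < a) (ha1 : a < 1) (hw : 0 ≤ w) (ℓ : ℕ) :
    ∃ C, ∀ k : ℕ, |Wf a b w pmin pmax M ℓ k| ≤ C*(k+1) := by
  set C1 := |a/(1-a)| * (|pmin - M| + w) + |w*a^2/(1-a)^2| with hC1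
  have hWa : ∀ k : ℕ, |Wa a w pmin M k| ≤ C1*(k+1) := by
    intro k
    have h1 : |Wa a w pmin M k| ≤ |a/(1-a)| * |pmin - w*k - M| + |w*a^2/(1-a)^2| := by
      rw [Wa]
      refine (abs_sub _ _).trans ?_
      rw [abs_mul]
    have h2 : |pmin - w*(k:ℝ) - M| ≤ |pmin - M| + w*k := by
      have : pmin - w*(k:ℝ) - M = (pmin - M) - w*k := by ring
      rw [this]
      refine (abs_sub _ _).trans ?_
      have : |w*(k:ℝ)| = w*k := abs_of_nonneg (by positivity)
      rw [this]
    have hk0 : (0:ℝ) ≤ (k:ℝ) := Nat.cast_nonneg k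
    have h3 : (0:ℝ) ≤ |a/(1-a)| := abs_nonneg _
    calc |Wa a w pmin M k| ≤ |a/(1-a)| *(|pmin - M| + w*k) + |w*a^2/(1-a)^2| := by
          refine h1.trans ?_
          have := mul_le_mul_of_nonneg_left h2 h3
          linarith
      _ ≤ C1*(k+1) := by
          rw [hC1]
          have h1' : (0:ℝ) ≤ |pmin - M| := abs_nonneg _
          have h2' : (0:ℝ) ≤ |w*a^2/(1-a)^2| := abs_nonneg _
          nlinarith [mul_nonneg h3 (mul_nonneg hw hk0), mul_nonneg h3 h1',
            mul_nonneg h2' hk0]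
  have hne : (Finset.range (ℓ+2)).Nonempty := ⟨0, by simp⟩
  set C2 := (Finset.range (ℓ+2)).sup' hne (fun m => |WfAux a b w pmin pmax M ℓ m|) with hC2
  have hC2nn : 0 ≤ C2 := le_trans (abs_nonneg _)
    (Finset.le_sup' (fun m => |WfAux a b w pmin pmax M ℓ m|) (by simp : 0 ∈ Finset.range (ℓ+2)))
  refine ⟨max C1 C2, fun k => ?_⟩
  have hk1 : (1:ℝ) ≤ (k:ℝ)+1 := by have := Nat.cast_nonneg (α := ℝ) k; linarith
  rcases lt_or_ge ℓ k with h | h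
  · rw [Wf, if_pos h]
    refine (hWa k).trans ?_
    have : (0:ℝ) ≤ (k:ℝ)+1 := by linarith
    nlinarith [le_max_left C1 C2]
  · rw [Wf, if_neg (not_lt.mpr h)]
    have hmem : ℓ+1-k ∈ Finset.range (ℓ+2) := by
      simp only [Finset.mem_range]; omega
    have := Finset.le_sup' (fun m => |WfAux a b w pmin pmax M ℓ m|) hmem
    calc |WfAux a b w pmin pmax M ℓ (ℓ+1-k)| ≤ C2 := this
      _ ≤ max C1 C2 * 1 := by rw [mul_one]; exact le_max_right _ _
      _ ≤ max C1 C2 * ((k:ℝ)+1) := by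
          refine mul_le_mul_of_nonneg_left hk1 ?_
          exact le_trans hC2nn (le_max_right _ _)

/-- Bellman inequality for `Wf` at an optimal threshold. -/
lemma bellman (ha0 : 0 < a) (ha1 : a < 1) (hb : 0 < b) (hw : 0 < w)
    (hpa : a*beta' - lam' = a*pmin) (hpb : b*beta' - lam' = b*pmax) (ℓ : ℕ)
    (h0 : cA a w pmin beta' M (ℓ+1) ≤ 0) (h1 : 1 ≤ ℓ → 0 ≤ cA a w pmin beta' M ℓ) :
    ∀ k, 1 ≤ k → ∀ x, a ≤ x → x ≤ b →
      x*(beta' - w*k - M + Wf a b w pmin pmax M ℓ (k+1)) - lam'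
        ≤ Wf a b w pmin pmax M ℓ k := by
  intro k hk x hax hxb
  have ha : a ≠ 1 := ne_of_lt ha1
  have hW := Wf_eq_c (a := a) (b := b) (w := w) (pmin := pmin) (pmax := pmax)
    (beta' := beta') (lam' := lam') (M := M) ha hpa hpb ℓ hk
  have hLHS : x*(beta' - w*k - M + Wf a b w pmin pmax M ℓ (k+1)) - lam'
      = x * cfun a b w pmin pmax beta' M ℓ k - lam' := by rw [cfun]
  rw [hLHS, hW]
  rcases le_or_gt k ℓ with h | h
  · rw [if_pos h]
    have hc : 0 ≤ cfun a b w pmin pmax beta' M ℓ k :=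
      c_nonneg ha0 ha1 hb hw hpa hpb ℓ h0 (h1 (by omega)) k hk h
    nlinarith
  · rw [if_neg (not_le.mpr h)]
    have hc : cfun a b w pmin pmax beta' M ℓ k ≤ 0 :=
      c_nonpos ha0 ha1 hw ℓ h0 k (by omega)
    nlinarith

/-- telescoping: partial sums of the shifted objective are controlled by `W`. -/
lemma partial_le (W : ℕ → ℝ) (ρ : ℕ → ℝ) (q : ℕ → ℝ)
    (ha0 : 0 < a)
    (hρ : ∀ i, 1 ≤ i → a ≤ ρ i ∧ ρ i ≤ b)
    (hρq : ∀ i, 1 ≤ i → ρ i * q i = beta' * ρ i - lam')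
    (hq0 : q 0 = pmax)
    (hbell : ∀ k, 1 ≤ k → ∀ x, a ≤ x → x ≤ b →
      x*(beta' - w*k - M + W (k+1)) - lam' ≤ W k) :
    ∀ n, (∑ i ∈ Finset.range (n+1), hseq ρ i * (q i - w*i - M)) + hseq ρ n * W (n+1)
      ≤ (pmax - M) + W 1 := by
  have hρpos : ∀ i, 1 ≤ i → 0 < ρ i := fun i hi => lt_of_lt_of_le ha0 (hρ i hi).1
  intro n
  induction n with
  | zero => simp [hseq_zero, hq0]
  | succ n ih =>
      rw [Finset.sum_range_succ, hseq_succ]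
      have hpos := hseq_pos ρ hρpos n
      have hx := hρ (n+1) (by omega)
      have hb1 := hbell (n+1) (by omega) (ρ (n+1)) hx.1 hx.2
      have hq1 := hρq (n+1) (by omega)
      have key : hseq ρ n * ρ (n+1) * (q (n+1) - w*(n+1) - M)
          + hseq ρ n * ρ (n+1) * W (n+2)
            ≤ hseq ρ n * W (n+1) := by
        have hb2 := mul_le_mul_of_nonneg_left hb1 (le_of_lt hpos)
        have hq2 : hseq ρ n * (ρ (n+1) * q (n+1))
            = hseq ρ n * (beta' * ρ (n+1) - lam') := by rw [hq1]
        push_cast at hb2 hq2 ⊢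
        nlinarith [hb2, hq2]
      push_cast at key ⊢
      linarith [ih]

/-- equality version along the threshold policy itself. -/
lemma partial_eq (W : ℕ → ℝ) (ρ : ℕ → ℝ) (q : ℕ → ℝ)
    (ha0 : 0 < a)
    (hρpos : ∀ i, 1 ≤ i → 0 < ρ i)
    (hρq : ∀ i, 1 ≤ i → ρ i * q i = beta' * ρ i - lam')
    (hq0 : q 0 = pmax)
    (hrec : ∀ k, 1 ≤ k → W k = ρ k *(beta' - w*k - M + W (k+1)) - lam') :
    ∀ n, (∑ i ∈ Finset.range (n+1), hseq ρ i * (q i - w*i - M)) + hseq ρ n * W (n+1)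
      = (pmax - M) + W 1 := by
  intro n
  induction n with
  | zero => simp [hseq_zero, hq0]
  | succ n ih =>
      rw [Finset.sum_range_succ, hseq_succ]
      have hq1 := hρq (n+1) (by omega)
      have hr := hrec (n+1) (by omega)
      have key : hseq ρ n * ρ (n+1) * (q (n+1) - w*(n+1) - M)
          + hseq ρ n * ρ (n+1) * W (n+2)
            = hseq ρ n * W (n+1) := by
        push_cast at hq1 hr ⊢
        linear_combination hseq ρ n * hq1 - hseq ρ n * hr
      push_cast at key ⊢
      linarith [ih]

end Layer3

section Layer4
variable {a b w pmin pmax beta' lam' M : ℝ}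

lemma summable_hq (ρ q : ℕ → ℝ) (hsum : Summable (hseq ρ))
    (hρ : ∀ i, 1 ≤ i → 0 < ρ i)
    (hq : ∀ i, pmin ≤ q i ∧ q i ≤ pmax) (hpmin : 0 < pmin) :
    Summable (fun i => hseq ρ i * q i) := by
  refine Summable.of_abs (Summable.of_nonneg_of_le (fun i => abs_nonneg _)
    (fun i => ?_) (hsum.mul_left pmax))
  have hpos := hseq_pos ρ hρ i
  have h1 := (hq i).1
  have h2 := (hq i).2
  rw [abs_mul, abs_of_pos hpos, abs_of_pos (lt_of_lt_of_le hpmin h1)]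
  nlinarith

lemma summable_term (ρ q : ℕ → ℝ) (hsum : Summable (hseq ρ))
    (hisum : Summable (fun i : ℕ => (i:ℝ) * hseq ρ i))
    (hρ : ∀ i, 1 ≤ i → 0 < ρ i) (hw : 0 ≤ w)
    (hq : ∀ i, pmin ≤ q i ∧ q i ≤ pmax) (hpmin : 0 < pmin) :
    Summable (fun i => hseq ρ i * (q i - w*i - M)) := by
  have hmaj : Summable (fun i => (pmax + |M|) * hseq ρ i + w * ((i:ℝ)*hseq ρ i)) :=
    (hsum.mul_left _).add (hisum.mul_left _)
  refine Summable.of_abs (Summable.of_nonneg_of_le (fun i => abs_nonneg _)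
    (fun i => ?_) hmaj)
  have hpos := hseq_pos ρ hρ i
  have h1 := (hq i).1
  have h2 := (hq i).2
  have hM : |q i - w*i - M| ≤ (pmax + |M|) + w*i := by
    have hi0 : (0:ℝ) ≤ (i:ℝ) := Nat.cast_nonneg i
    have habs1 := le_abs_self M
    have habs2 := neg_abs_le M
    rw [abs_le]
    constructor <;> nlinarith
  rw [abs_mul, abs_of_pos hpos]
  calc hseq ρ i * |q i - w*i - M| ≤ hseq ρ i * ((pmax + |M|) + w*i) :=
        mul_le_mul_of_nonneg_left hM (le_of_lt hpos)
    _ = (pmax + |M|) * hseq ρ i + w * ((i:ℝ)*hseq ρ i) := by ring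

lemma transversality (W ρ : ℕ → ℝ) (C : ℝ)
    (hgrow : ∀ k : ℕ, |W k| ≤ C*(k+1))
    (hρ : ∀ i, 1 ≤ i → 0 < ρ i)
    (hsum : Summable (hseq ρ))
    (hisum : Summable (fun i : ℕ => (i:ℝ) * hseq ρ i)) :
    Filter.Tendsto (fun n => hseq ρ n * W (n+1)) Filter.atTop (nhds 0) := by
  have hC0 : 0 ≤ C := le_trans (abs_nonneg _) (by simpa using hgrow 0)
  have hg : Filter.Tendsto
      (fun n : ℕ => C * ((n:ℝ)*hseq ρ n) + (2*C) * hseq ρ n) Filter.atTop (nhds 0) := by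
    have h1 := (hisum.tendsto_atTop_zero).const_mul C
    have h2 := (hsum.tendsto_atTop_zero).const_mul (2*C)
    simpa using h1.add h2
  refine squeeze_zero_norm (fun n => ?_) hg
  have hpos := hseq_pos ρ hρ n
  have hb := hgrow (n+1)
  have : ‖hseq ρ n * W (n+1)‖ = hseq ρ n * |W (n+1)| := by
    rw [norm_mul, Real.norm_eq_abs, Real.norm_eq_abs, abs_of_pos hpos]
  rw [this]
  have h3 : hseq ρ n * |W (n+1)| ≤ hseq ρ n * (C*((n:ℝ)+1+1)) :=
    mul_le_mul_of_nonneg_left (by push_cast at hb ⊢; linarith) (le_of_lt hpos)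
  push_cast at h3 ⊢
  nlinarith [h3]

lemma tsum_le_of_bellman (W ρ q : ℕ → ℝ) (C : ℝ)
    (ha0 : 0 < a)
    (hρ : ∀ i, 1 ≤ i → a ≤ ρ i ∧ ρ i ≤ b)
    (hρq : ∀ i, 1 ≤ i → ρ i * q i = beta' * ρ i - lam')
    (hq0 : q 0 = pmax)
    (hbell : ∀ k, 1 ≤ k → ∀ x, a ≤ x → x ≤ b →
      x*(beta' - w*k - M + W (k+1)) - lam' ≤ W k)
    (hgrow : ∀ k : ℕ, |W k| ≤ C*(k+1))
    (hsum : Summable (hseq ρ))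
    (hisum : Summable (fun i : ℕ => (i:ℝ) * hseq ρ i))
    (hw : 0 ≤ w)
    (hq : ∀ i, pmin ≤ q i ∧ q i ≤ pmax) (hpmin : 0 < pmin) :
    ∑' i, hseq ρ i * (q i - w*i - M) ≤ (pmax - M) + W 1 := by
  have hρpos : ∀ i, 1 ≤ i → 0 < ρ i := fun i hi => lt_of_lt_of_le ha0 (hρ i hi).1
  have hS := summable_term (M := M) ρ q hsum hisum hρpos hw hq hpmin
  have h1 : Filter.Tendsto
      (fun n => (∑ i ∈ Finset.range (n+1), hseq ρ i * (q i - w*i - M))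
        + hseq ρ n * W (n+1)) Filter.atTop
      (nhds ((∑' i, hseq ρ i * (q i - w*i - M)) + 0)) := by
    refine Filter.Tendsto.add ?_ (transversality W ρ C hgrow hρpos hsum hisum)
    exact hS.hasSum.tendsto_sum_nat.comp (Filter.tendsto_add_atTop_nat 1)
  have h2 := le_of_tendsto h1 (Filter.Eventually.of_forall
    (partial_le (a := a) (b := b) (w := w) (pmax := pmax)
      (beta' := beta') (lam' := lam') (M := M) W ρ q ha0 hρ hρq hq0 hbell))
  linarith

lemma tsum_eq_of_rec (W ρ q : ℕ → ℝ) (C : ℝ)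
    (ha0 : 0 < a)
    (hρpos : ∀ i, 1 ≤ i → 0 < ρ i)
    (hρq : ∀ i, 1 ≤ i → ρ i * q i = beta' * ρ i - lam')
    (hq0 : q 0 = pmax)
    (hrec : ∀ k, 1 ≤ k → W k = ρ k *(beta' - w*k - M + W (k+1)) - lam')
    (hgrow : ∀ k : ℕ, |W k| ≤ C*(k+1))
    (hsum : Summable (hseq ρ))
    (hisum : Summable (fun i : ℕ => (i:ℝ) * hseq ρ i))
    (hw : 0 ≤ w)
    (hq : ∀ i, pmin ≤ q i ∧ q i ≤ pmax) (hpmin : 0 < pmin) :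
    ∑' i, hseq ρ i * (q i - w*i - M) = (pmax - M) + W 1 := by
  have hS := summable_term (M := M) ρ q hsum hisum hρpos hw hq hpmin
  have h1 : Filter.Tendsto
      (fun n => (∑ i ∈ Finset.range (n+1), hseq ρ i * (q i - w*i - M))
        + hseq ρ n * W (n+1)) Filter.atTop
      (nhds ((∑' i, hseq ρ i * (q i - w*i - M)) + 0)) := by
    refine Filter.Tendsto.add ?_ (transversality W ρ C hgrow hρpos hsum hisum)
    exact hS.hasSum.tendsto_sum_nat.comp (Filter.tendsto_add_atTop_nat 1)
  have h2 : Filter.Tendsto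
      (fun _ : ℕ => (pmax - M) + W 1) Filter.atTop (nhds ((pmax - M) + W 1)) :=
    tendsto_const_nhds
  have h3 := tendsto_nhds_unique
    (h1.congr (fun n => (partial_eq (a := a) (w := w) (pmax := pmax)
      (beta' := beta') (lam' := lam') (M := M) W ρ q ha0 hρpos hρq hq0 hrec n)))
    h2
  linarith

lemma tsum_split (ρ q : ℕ → ℝ)
    (hρpos : ∀ i, 1 ≤ i → 0 < ρ i)
    (hsum : Summable (hseq ρ))
    (hisum : Summable (fun i : ℕ => (i:ℝ) * hseq ρ i))
    (hqs : Summable (fun i => hseq ρ i * q i)) :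
    ∑' i, hseq ρ i * (q i - w*i - M)
      = (∑' i, hseq ρ i * q i) - w*(∑' i : ℕ, (i:ℝ)*hseq ρ i) - M*(∑' i, hseq ρ i) := by
  have e : (fun i => hseq ρ i * (q i - w*i - M))
      = fun i : ℕ => hseq ρ i * q i - (w*((i:ℝ)*hseq ρ i) + M*hseq ρ i) := by
    funext i; ring
  rw [e, Summable.tsum_sub hqs ((hisum.mul_left w).add (hsum.mul_left M)),
    Summable.tsum_add (hisum.mul_left w) (hsum.mul_left M), tsum_mul_left, tsum_mul_left]
  ring

end Layer4

section L5a
variable {b : ℝ}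

lemma geom_reflect (hb : 1 ≤ b) (n : ℕ) :
    (n:ℝ) * ∑ k ∈ Finset.range (n+1), b^k
      ≤ 2 * ∑ k ∈ Finset.range (n+1), (k:ℝ)*b^k := by
  have hb0 : (0:ℝ) ≤ b := by linarith
  have refl1 : ∑ k ∈ Finset.range (n+1), (((n-k : ℕ)):ℝ)*b^(n-k)
      = ∑ k ∈ Finset.range (n+1), (k:ℝ)*b^k := by
    simpa using Finset.sum_range_reflect (fun k => (k:ℝ)*b^k) (n+1)
  have refl2 : ∑ k ∈ Finset.range (n+1), b^(n-k)
      = ∑ k ∈ Finset.range (n+1), b^k := by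
    simpa using Finset.sum_range_reflect (fun k => b^k) (n+1)
  have pointwise : ∀ k ∈ Finset.range (n+1),
      (n:ℝ)*b^k + (n:ℝ)*b^(n-k)
        ≤ 2*((k:ℝ)*b^k) + 2*((((n-k : ℕ)):ℝ)*b^(n-k)) := by
    intro k hk
    rw [Finset.mem_range] at hk
    have hkn : k ≤ n := by omega
    have hcast : (((n-k : ℕ)):ℝ) = (n:ℝ) - (k:ℝ) := by
      push_cast [Nat.cast_sub hkn]; ring
    rw [hcast]
    rcases le_or_gt (n-k) k with h | h
    · have hpow : b^(n-k) ≤ b^k := pow_le_pow_right₀ hb h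
      have h2' : (n:ℝ) ≤ 2*(k:ℝ) := by exact_mod_cast (by omega : n ≤ 2*k)
      nlinarith [mul_nonneg (by linarith : (0:ℝ) ≤ 2*(k:ℝ) - n)
        (by linarith : (0:ℝ) ≤ b^k - b^(n-k))]
    · have hpow : b^k ≤ b^(n-k) := pow_le_pow_right₀ hb (by omega)
      have h2' : 2*(k:ℝ) ≤ (n:ℝ) := by exact_mod_cast (by omega : 2*k ≤ n)
      nlinarith [mul_nonneg (by linarith : (0:ℝ) ≤ (n:ℝ) - 2*(k:ℝ))
        (by linarith : (0:ℝ) ≤ b^(n-k) - b^k)]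
  have H := Finset.sum_le_sum pointwise
  rw [Finset.sum_add_distrib, Finset.sum_add_distrib] at H
  rw [← Finset.mul_sum, ← Finset.mul_sum, refl2] at H
  have h3 : ∑ k ∈ Finset.range (n+1), 2*((((n-k : ℕ)):ℝ)*b^(n-k))
      = 2 * ∑ k ∈ Finset.range (n+1), (k:ℝ)*b^k := by
    rw [← refl1, Finset.mul_sum]
  rw [h3] at H
  have h4 : ∑ k ∈ Finset.range (n+1), 2*((k:ℝ)*b^k)
      = 2 * ∑ k ∈ Finset.range (n+1), (k:ℝ)*b^k := by
    rw [Finset.mul_sum]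
  rw [h4] at H
  linarith

lemma sum_Icc_one (f : ℕ → ℝ) (n : ℕ) :
    ∑ k ∈ Finset.range (n+1), f k = f 0 + ∑ k ∈ Finset.Icc 1 n, f k := by
  induction n with
  | zero => simp
  | succ n ih =>
      rw [Finset.sum_range_succ, ih, Finset.sum_Icc_succ_top (by omega : 1 ≤ n+1)]
      ring

end L5a

noncomputable def Minf (b w pmax : ℝ) : ℝ := pmax - w*b/(1-b)

noncomputable def Wb (b w : ℝ) (k : ℕ) : ℝ :=
  b/(1-b)*(w*b/(1-b) - w*k) - w*b^2/(1-b)^2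

section Layer5
variable {a b w pmin pmax : ℝ}

lemma wb_id (hb1 : b < 1) (ℓ : ℕ) :
    (pmax - Minf b w pmax) + (∑ k ∈ Finset.Icc 1 ℓ, b^k*(pmax - w*k - Minf b w pmax))
      + b^ℓ * Wb b w (ℓ+1) = 0 := by
  have hbne : (1:ℝ) - b ≠ 0 := sub_ne_zero.mpr (ne_of_gt (by linarith))
  induction ℓ with
  | zero =>
      simp only [Finset.Icc_eq_empty (by omega : ¬ (1:ℕ) ≤ 0), Finset.sum_empty, pow_zero]
      unfold Minf Wb
      push_cast
      field_simp
      ring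
  | succ ℓ ih =>
      rw [Finset.sum_Icc_succ_top (by omega : 1 ≤ ℓ+1)]
      have hstep : b*(pmax - w*(ℓ+1) - Minf b w pmax + Wb b w (ℓ+2)) = Wb b w (ℓ+1) := by
        unfold Minf Wb
        push_cast
        field_simp
        ring
      push_cast at ih hstep ⊢
      linear_combination ih + b^ℓ * hstep

lemma Mval_sub_Minf (ha0 : 0 < a) (ha1 : a < 1) (hb0 : 0 < b) (hb1 : b < 1) (ℓ : ℕ) :
    (Mval a b w pmin pmax ℓ - Minf b w pmax) * (1 + kap a b ℓ 1)
      = b^ℓ * (Wa a w pmin (Minf b w pmax) (ℓ+1) - Wb b w (ℓ+1)) := by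
  have hm := master (w := w) (pmin := pmin) (pmax := pmax) ha0 ha1 hb0 ℓ (Minf b w pmax)
  have hu := Wf_unroll (b := b) (w := w) (pmin := pmin) (pmax := pmax)
    (M := Minf b w pmax) ha0 ha1 ℓ ℓ le_rfl
  have hWa : Wf a b w pmin pmax (Minf b w pmax) ℓ (ℓ+1)
      = Wa a w pmin (Minf b w pmax) (ℓ+1) := by rw [Wf, if_pos (by omega)]
  rw [hWa] at hu
  have hwb := wb_id (w := w) (pmax := pmax) hb1 ℓ
  rw [hu] at hm
  linarith [hm, hwb]

lemma argmax_helper (u : ℕ → ℝ) (n0 N : ℕ) (h : ∀ ℓ, N ≤ ℓ → u ℓ ≤ u n0) :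
    ∃ L, ∀ ℓ, u ℓ ≤ u L := by
  obtain ⟨m, _, hmax⟩ := Finset.exists_max_image (Finset.range (N+n0+1)) u ⟨0, by simp⟩
  refine ⟨m, fun ℓ => ?_⟩
  by_cases hℓ : ℓ < N+n0+1
  · exact hmax ℓ (Finset.mem_range.mpr hℓ)
  · push_neg at hℓ
    exact le_trans (h ℓ (by omega)) (hmax n0 (Finset.mem_range.mpr (by omega)))

lemma bound_core {a w pmin pmax M T T2 P L : ℝ}
    (ha0 : 0 < a) (ha1 : a < 1) (hw : 0 < w)
    (hc1 : pmin ≤ w*(L+1)) (hc2 : pmax ≤ w*L/2)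
    (hTl : L ≤ T) (hT0 : 0 ≤ T) (hP0 : 0 < P) (hPT : P ≤ T)
    (hrefl : L*(1+T) ≤ 2*T2)
    (hmaster : pmax - M + (pmax*T - w*T2 - M*T)
      + P*(a/(1-a)*(pmin - w*(L+1) - M) - w*a^2/(1-a)^2) = 0) :
    M ≤ (1-a)*(pmax - w*L/2) := by
  have h1a : (0:ℝ) < 1 - a := by linarith
  obtain ⟨c, hc⟩ : ∃ c, c = a/(1-a) := ⟨_, rfl⟩
  have hcsq : w*a^2/(1-a)^2 = w*c^2 := by rw [hc, div_pow]; ring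
  rw [← hc, hcsq] at hmaster
  have hc0 : (0:ℝ) ≤ c := by rw [hc]; positivity
  have h1c : (1-a)*(1+c) = 1 := by
    rw [hc]
    field_simp
    ring
  have hD : (0:ℝ) < 1 + T + P*c := by nlinarith
  have hxneg : pmax - w*L/2 ≤ 0 := by linarith
  have hP1 : 0 ≤ P*c*(w*(L+1) - pmin) :=
    mul_nonneg (mul_nonneg (le_of_lt hP0) hc0) (by linarith)
  have hP2 : (0:ℝ) ≤ P*(w*c^2) := by positivity
  have hwT2 : w*(L*(1+T)) ≤ w*(2*T2) := mul_le_mul_of_nonneg_left hrefl (le_of_lt hw)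
  have step1 : M*(1 + T + P*c) ≤ (1+T)*(pmax - w*L/2) := by nlinarith
  have hDle : 1 + T + P*c ≤ (1+T)*(1+c) := by nlinarith
  by_contra hcon
  push_neg at hcon
  have e2 : (1-a)*(pmax - w*L/2)*(1 + T + P*c) < M*(1 + T + P*c) :=
    mul_lt_mul_of_pos_right hcon hD
  have e1 : (pmax - w*L/2)*(1+T) ≤ (1-a)*(pmax - w*L/2)*(1 + T + P*c) := by
    have h5 : (1-a)*(pmax - w*L/2) ≤ 0 := mul_nonpos_of_nonneg_of_nonpos (by linarith) hxneg
    have h6 := mul_le_mul_of_nonpos_left hDle h5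
    calc (pmax - w*L/2)*(1+T) = ((1-a)*(pmax - w*L/2))*((1+T)*(1+c)) := by
          have h7 : (pmax - w*L/2)*(1+T) = ((1-a)*(1+c))*((pmax - w*L/2)*(1+T)) := by
            rw [h1c]; ring
          rw [h7]; ring
      _ ≤ ((1-a)*(pmax - w*L/2))*(1 + T + P*c) := h6
      _ = (1-a)*(pmax - w*L/2)*(1 + T + P*c) := by ring
  linarith

lemma Mval_bound_bge1 (ha0 : 0 < a) (ha1 : a < 1) (hb1 : 1 ≤ b) (hw : 0 < w)
    (hpmin : 0 < pmin) {ℓ : ℕ} (hℓ1 : 1 ≤ ℓ)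
    (hcond1 : pmin ≤ w*((ℓ:ℝ)+1)) (hcond2 : pmax ≤ w*ℓ/2) :
    Mval a b w pmin pmax ℓ ≤ (1-a)*(pmax - w*ℓ/2) := by
  have hb0 : (0:ℝ) < b := by linarith
  have hgoal : ∀ M : ℝ, M = Mval a b w pmin pmax ℓ → M ≤ (1-a)*(pmax - w*ℓ/2) := by
    intro M hM
    have hmaster := master (w := w) (pmin := pmin) (pmax := pmax) ha0 ha1 hb0 ℓ M
    rw [← hM, sub_self, zero_mul] at hmaster
    have hunroll := Wf_unroll (b := b) (w := w) (pmin := pmin) (pmax := pmax)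
      (M := M) ha0 ha1 ℓ ℓ le_rfl
    have hWaeq : Wf a b w pmin pmax M ℓ (ℓ+1) = Wa a w pmin M (ℓ+1) := by
      rw [Wf, if_pos (by omega)]
    rw [hWaeq] at hunroll
    set T := ∑ k ∈ Finset.Icc 1 ℓ, b^k with hT
    set T2 := ∑ k ∈ Finset.Icc 1 ℓ, (k:ℝ)*b^k with hT2
    have hsplit : ∑ k ∈ Finset.Icc 1 ℓ, b^k*(pmax - w*(k:ℝ) - M) = pmax*T - w*T2 - M*T := by
      rw [hT, hT2, Finset.mul_sum, Finset.mul_sum, Finset.mul_sum,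
        ← Finset.sum_sub_distrib, ← Finset.sum_sub_distrib]
      exact Finset.sum_congr rfl (fun k _ => by ring)
    rw [hunroll, hsplit] at hmaster
    unfold Wa at hmaster
    have hTl : (ℓ:ℝ) ≤ T := by
      have h1 : ∀ k ∈ Finset.Icc 1 ℓ, (1:ℝ) ≤ b^k := fun k _ => one_le_pow₀ hb1
      have h2 : ∑ _k ∈ Finset.Icc 1 ℓ, (1:ℝ) ≤ T := Finset.sum_le_sum h1
      rw [Finset.sum_const, Nat.card_Icc] at h2
      simpa using h2
    have hT0 : (0:ℝ) ≤ T :=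
      Finset.sum_nonneg (fun k _ => pow_nonneg (le_of_lt hb0) k)
    have hbl : b^ℓ ≤ T :=
      Finset.single_le_sum (f := fun k => b^k)
        (fun k _ => pow_nonneg (le_of_lt hb0) k)
        (Finset.mem_Icc.mpr ⟨hℓ1, le_rfl⟩)
    have hblpos : (0:ℝ) < b^ℓ := pow_pos hb0 ℓ
    have hrefl : (ℓ:ℝ)*(1+T) ≤ 2*T2 := by
      have hg := geom_reflect hb1 ℓ
      rw [sum_Icc_one (fun k => b^k) ℓ, sum_Icc_one (fun k => (k:ℝ)*b^k) ℓ] at hg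
      simpa using hg
    clear_value T T2
    refine bound_core (T := T) (T2 := T2) (P := b^ℓ) (L := (ℓ:ℝ))
      ha0 ha1 hw hcond1 hcond2 hTl hT0 hblpos hbl hrefl ?_
    push_cast at hmaster
    linarith [hmaster]
  exact hgoal _ rfl

set_option maxHeartbeats 1000000 in
lemma exists_argmax (ha0 : 0 < a) (ha1 : a < 1) (hb0 : 0 < b) (hab : a < b)
    (hw : 0 < w) (hpmin : 0 < pmin) (hpm : pmin < pmax) :
    ∃ L : ℕ, ∀ ℓ : ℕ, Mval a b w pmin pmax ℓ ≤ Mval a b w pmin pmax L := by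
  have hpmax0 : 0 < pmax := lt_trans hpmin hpm
  rcases lt_or_ge b 1 with hb1 | hb1
  · -- b < 1 : Mval ℓ → Minf, with some Mval ℓ0 > Minf
    set s := w*(b/(1-b) - a/(1-a)) with hs
    have hfrac : a/(1-a) < b/(1-b) := by
      rw [div_lt_div_iff₀ (by linarith) (by linarith)]
      nlinarith
    have hs0 : 0 < s := by
      rw [hs]; apply mul_pos hw; linarith
    set c0 := (a/(1-a)*(pmin - Minf b w pmax) - w*a^2/(1-a)^2)
      - (b/(1-b)*(w*b/(1-b)) - w*b^2/(1-b)^2) with hc0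
    have hΔ : ∀ k : ℕ, Wa a w pmin (Minf b w pmax) k - Wb b w k = s*(k:ℝ) + c0 := by
      intro k
      rw [hs, hc0]
      unfold Wa Wb
      ring
    -- choose ℓ0 with positive gap
    obtain ⟨n, hn⟩ := exists_nat_gt ((-c0)/s)
    set ℓ0 := n with hℓ0
    have hΔpos : 0 < s*((ℓ0:ℝ)+1) + c0 := by
      have h1 : (-c0)/s < (ℓ0:ℝ)+1 := by
        calc (-c0)/s < (n:ℝ) := hn
          _ ≤ (ℓ0:ℝ)+1 := by rw [hℓ0]; linarith
      have := (div_lt_iff₀ hs0).mp h1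
      nlinarith
    have hkey0 := Mval_sub_Minf (a := a) (w := w) (pmin := pmin) (pmax := pmax)
      ha0 ha1 hb0 hb1 ℓ0
    rw [hΔ (ℓ0+1)] at hkey0
    have hkap0 := kap_pos (a := a) (b := b) ha0 ha1 hb0 ℓ0 1
    have hδ : 0 < Mval a b w pmin pmax ℓ0 - Minf b w pmax := by
      push_cast at hkey0
      have hpos : 0 < b^ℓ0 * (s*((ℓ0:ℝ)+1) + c0) := mul_pos (pow_pos hb0 ℓ0) hΔpos
      nlinarith [hkey0, hkap0, hpos]
    set δ := Mval a b w pmin pmax ℓ0 - Minf b w pmax with hδdef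
    -- tail tendsto 0
    have ht1 : Filter.Tendsto (fun ℓ : ℕ => (ℓ:ℝ)*b^ℓ) Filter.atTop (nhds 0) := by
      have hsum := summable_pow_mul_geometric_of_norm_lt_one (R := ℝ) 1
        (r := b) (by rw [Real.norm_eq_abs, abs_of_pos hb0]; exact hb1)
      have := hsum.tendsto_atTop_zero
      simpa [pow_one] using this
    have ht2 : Filter.Tendsto (fun ℓ : ℕ => b^ℓ) Filter.atTop (nhds 0) :=
      tendsto_pow_atTop_nhds_zero_of_lt_one (le_of_lt hb0) hb1
    have hX : Filter.Tendsto (fun ℓ : ℕ => b^ℓ*(s*((ℓ:ℝ)+1) + c0)) Filter.atTop (nhds 0) := by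
      have h3 : (fun ℓ : ℕ => b^ℓ*(s*((ℓ:ℝ)+1) + c0))
          = fun ℓ : ℕ => s*((ℓ:ℝ)*b^ℓ) + (s + c0)*b^ℓ := by
        funext ℓ; ring
      rw [h3]
      have := (ht1.const_mul s).add (ht2.const_mul (s + c0))
      simpa using this
    have habs : Filter.Tendsto (fun ℓ : ℕ => |b^ℓ*(s*((ℓ:ℝ)+1) + c0)|)
        Filter.atTop (nhds 0) := by
      have := hX.abs
      simpa using this
    have hev := habs.eventually (gt_mem_nhds hδ)
    obtain ⟨N, hN⟩ := Filter.eventually_atTop.mp hev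
    refine argmax_helper _ ℓ0 N (fun ℓ hℓ => ?_)
    have hkey := Mval_sub_Minf (a := a) (w := w) (pmin := pmin) (pmax := pmax)
      ha0 ha1 hb0 hb1 ℓ
    rw [hΔ (ℓ+1)] at hkey
    have hkap := kap_pos (a := a) (b := b) ha0 ha1 hb0 ℓ 1
    have hXb := hN ℓ hℓ
    have h7 : Mval a b w pmin pmax ℓ - Minf b w pmax < δ := by
      set Y := Mval a b w pmin pmax ℓ - Minf b w pmax with hY
      rcases le_or_gt Y 0 with h | h
      · linarith
      · have h8 : Y ≤ Y * (1 + kap a b ℓ 1) := by nlinarith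
        have h9 : Y * (1 + kap a b ℓ 1) ≤ |b^ℓ*(s*((ℓ:ℝ)+1) + c0)| := by
          push_cast at hkey ⊢
          calc Y * (1 + kap a b ℓ 1) = b^ℓ*(s*((ℓ:ℝ)+1) + c0) := by
                push_cast; linarith [hkey]
            _ ≤ |b^ℓ*(s*((ℓ:ℝ)+1) + c0)| := le_abs_self _
        linarith
    linarith [h7]
  · -- 1 ≤ b
    obtain ⟨M0, hM0⟩ : ∃ M0, M0 = Mval a b w pmin pmax 0 := ⟨_, rfl⟩
    have hw' : w ≠ 0 := ne_of_gt hw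
    have h1a : (1:ℝ) - a ≠ 0 := by intro h; rw [sub_eq_zero] at h; exact absurd h.symm (ne_of_lt ha1)
    obtain ⟨N, hN⟩ := exists_nat_gt (max ((pmin/w) + 1)
      (max (2*pmax/w + 1) ((2/w)*(pmax - M0/(1-a)) + 1)))
    have hN1 : 1 ≤ N := by
      rcases Nat.eq_zero_or_pos N with h | h
      · exfalso
        rw [h] at hN
        have h1 : (pmin/w) + 1 ≤ max ((pmin/w) + 1)
            (max (2*pmax/w + 1) ((2/w)*(pmax - M0/(1-a)) + 1)) := le_max_left _ _
        have : 0 < pmin/w := div_pos hpmin hw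
        have : ((0:ℕ):ℝ) = 0 := by norm_num
        linarith [hN, h1]
      · exact h
    refine argmax_helper _ 0 N (fun ℓ hℓ => ?_)
    rw [← hM0]
    have hℓN : (N:ℝ) ≤ (ℓ:ℝ) := by exact_mod_cast hℓ
    have hmax1 := le_of_lt (lt_of_le_of_lt (le_max_left _ _) hN)
    have hmax2 := le_of_lt (lt_of_le_of_lt (le_trans (le_max_left _ _) (le_max_right _ _)) hN)
    have hmax3 := le_of_lt (lt_of_le_of_lt (le_trans (le_max_right _ _) (le_max_right _ _)) hN)
    have hc1 : pmin ≤ w*((ℓ:ℝ)+1) := by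
      have h8 : pmin/w ≤ (ℓ:ℝ) := by linarith
      rw [div_le_iff₀ hw] at h8
      linarith
    have hc2 : pmax ≤ w*(ℓ:ℝ)/2 := by
      have h8 : 2*pmax/w ≤ (ℓ:ℝ) := by linarith
      rw [div_le_iff₀ hw] at h8
      linarith
    have hbd := Mval_bound_bge1 (a := a) (pmin := pmin) (pmax := pmax)
      ha0 ha1 hb1 hw hpmin (by omega : 1 ≤ ℓ) hc1 hc2
    have hc3 : (1-a)*(pmax - w*(ℓ:ℝ)/2) ≤ M0 := by
      have h5 : (2/w)*(pmax - M0/(1-a)) ≤ (ℓ:ℝ) := by linarith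
      have key1 : w*((2/w)*(pmax - M0/(1-a))) = 2*(pmax - M0/(1-a)) := by
        field_simp
      have key2 : 2*(pmax - M0/(1-a)) ≤ w*(ℓ:ℝ) := by
        have h9 := mul_le_mul_of_nonneg_left h5 (le_of_lt hw)
        rw [key1] at h9
        exact h9
      have key3 : (1-a)*(M0/(1-a)) = M0 := by field_simp
      nlinarith [mul_le_mul_of_nonneg_left key2 (by linarith : (0:ℝ) ≤ 1-a), key3]
    linarith
end Layer5

section Layer6
variable {a b w pmin pmax beta' lam' : ℝ}

lemma one_le_tsum_hseq (ρ : ℕ → ℝ) (hρpos : ∀ i, 1 ≤ i → 0 < ρ i)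
    (hsum : Summable (hseq ρ)) : 1 ≤ ∑' i, hseq ρ i := by
  have h := Summable.le_tsum hsum 0 (fun j _ => le_of_lt (hseq_pos ρ hρpos j))
  rwa [hseq_zero] at h

lemma crelE_eq_real (lam beta alpha wt : ℝ) (q : ℕ → ℝ) (ρ : ℕ → ℝ)
    (hρdef : rhoOf lam beta alpha q = ρ)
    (hlam : 0 < lam) (hwt : 0 < wt) (hpmin : 0 < pmin)
    (hρpos : ∀ i, 1 ≤ i → 0 < ρ i)
    (hq : ∀ i, pmin ≤ q i ∧ q i ≤ pmax)
    (hsum : Summable (hseq ρ))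
    (hisum : Summable (fun i : ℕ => (i:ℝ) * hseq ρ i)) :
    CrelE lam beta alpha wt q =
      ((((∑' i, hseq ρ i * q i)
        - (wt/lam)*(∑' i : ℕ, (i:ℝ)*hseq ρ i))
        / (∑' i, hseq ρ i) : ℝ) : EReal) := by
  have hS1 : 1 ≤ ∑' i, hseq ρ i := one_le_tsum_hseq ρ hρpos hsum
  have hSpos : 0 < ∑' i, hseq ρ i := lt_of_lt_of_le one_pos hS1
  have hSne : (∑' i, hseq ρ i) ≠ 0 := ne_of_gt hSpos
  have hA : ∑' i, piseq ρ i * q i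
      = (∑' i, hseq ρ i * q i) * (∑' i, hseq ρ i)⁻¹ := by
    have h1 : ∀ i : ℕ, piseq ρ i * q i = (hseq ρ i * q i) * (∑' j, hseq ρ j)⁻¹ := by
      intro i; rw [piseq]; ring
    rw [tsum_congr h1, tsum_mul_right]
  have hπ : ∀ i : ℕ, (i:ℝ) * piseq ρ i = ((i:ℝ) * hseq ρ i) * (∑' j, hseq ρ j)⁻¹ := by
    intro i; rw [piseq]; ring
  have hπnn : ∀ i : ℕ, 0 ≤ (i:ℝ) * piseq ρ i := by
    intro i
    rw [hπ]
    have h2 := hseq_pos ρ hρpos i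
    have h3 : (0:ℝ) ≤ (∑' j, hseq ρ j)⁻¹ := inv_nonneg.mpr (le_of_lt hSpos)
    have h4 : (0:ℝ) ≤ (i:ℝ) := Nat.cast_nonneg i
    nlinarith [mul_nonneg (mul_nonneg h4 h2.le) h3]
  have hπsum : Summable (fun i : ℕ => (i:ℝ) * piseq ρ i) :=
    Summable.congr (hisum.mul_right ((∑' j, hseq ρ j)⁻¹)) (fun i => (hπ i).symm)
  have hB3 : ∑' i : ℕ, (i:ℝ) * piseq ρ i
      = (∑' i : ℕ, (i:ℝ) * hseq ρ i) * (∑' i, hseq ρ i)⁻¹ := by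
    rw [tsum_congr hπ, tsum_mul_right]
  have hB1 : (∑' i : ℕ, ENNReal.ofReal ((i:ℝ) * piseq ρ i))
      = ENNReal.ofReal (∑' i : ℕ, (i:ℝ) * piseq ρ i) :=
    (ENNReal.ofReal_tsum_of_nonneg hπnn hπsum).symm
  have hwl : 0 ≤ wt/lam := le_of_lt (div_pos hwt hlam)
  have hx0 : 0 ≤ (wt/lam) * ∑' i : ℕ, (i:ℝ) * piseq ρ i :=
    mul_nonneg hwl (tsum_nonneg hπnn)
  unfold CrelE
  rw [hρdef, hA, hB1, ← ENNReal.ofReal_mul hwl]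
  rw [EReal.coe_ennreal_ofReal, max_eq_left hx0, ← EReal.coe_sub]
  rw [EReal.coe_eq_coe_iff, hB3]
  field_simp

lemma crelE_bot (lam beta alpha wt : ℝ) (q : ℕ → ℝ) (ρ : ℕ → ℝ)
    (hρdef : rhoOf lam beta alpha q = ρ)
    (hlam : 0 < lam) (hwt : 0 < wt)
    (hρpos : ∀ i, 1 ≤ i → 0 < ρ i)
    (hsum : Summable (hseq ρ))
    (hnot : ¬ Summable (fun i : ℕ => (i:ℝ) * hseq ρ i)) :
    CrelE lam beta alpha wt q = ⊥ := by
  have hS1 : 1 ≤ ∑' i, hseq ρ i := one_le_tsum_hseq ρ hρpos hsum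
  have hSpos : 0 < ∑' i, hseq ρ i := lt_of_lt_of_le one_pos hS1
  have hSne : (∑' i, hseq ρ i) ≠ 0 := ne_of_gt hSpos
  have hπnot : ¬ Summable (fun i : ℕ => (i:ℝ) * piseq ρ i) := by
    intro hc
    apply hnot
    refine Summable.congr (hc.mul_right (∑' j, hseq ρ j)) (fun i => ?_)
    rw [piseq]
    field_simp
  have hπnn : ∀ i : ℕ, 0 ≤ (i:ℝ) * piseq ρ i := by
    intro i
    have h1 := hseq_pos ρ hρpos i
    have h4 : (0:ℝ) ≤ (i:ℝ) := Nat.cast_nonneg i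
    rw [piseq]
    have h5 : 0 ≤ hseq ρ i / ∑' j, hseq ρ j := div_nonneg h1.le hSpos.le
    exact mul_nonneg h4 h5
  have htop : (∑' i : ℕ, ENNReal.ofReal ((i:ℝ) * piseq ρ i)) = ⊤ := by
    by_contra hne
    apply hπnot
    exact Summable.congr (ENNReal.summable_toReal hne)
      (fun i => ENNReal.toReal_ofReal (hπnn i))
  unfold CrelE
  rw [hρdef, htop, ENNReal.mul_top (ne_of_gt (ENNReal.ofReal_pos.mpr (div_pos hwt hlam)))]
  rw [EReal.coe_ennreal_top, EReal.sub_top]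

lemma sign_conditions (ha0 : 0 < a) (ha1 : a < 1) (hb0 : 0 < b) (hab : a < b)
    (hpa : a*beta' - lam' = a*pmin) (hpb : b*beta' - lam' = b*pmax) (L : ℕ)
    (hL : ∀ ℓ, Mval a b w pmin pmax ℓ ≤ Mval a b w pmin pmax L) :
    cA a w pmin beta' (Mval a b w pmin pmax L) (L+1) ≤ 0 ∧
    (1 ≤ L → 0 ≤ cA a w pmin beta' (Mval a b w pmin pmax L) L) := by
  have hM0 : (pmax - Mval a b w pmin pmax L)
      + Wf a b w pmin pmax (Mval a b w pmin pmax L) L 1 = 0 := by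
    have h := master (w := w) (pmin := pmin) (pmax := pmax) ha0 ha1 hb0 L
      (Mval a b w pmin pmax L)
    rwa [sub_self, zero_mul] at h
  constructor
  · have h1 := master (w := w) (pmin := pmin) (pmax := pmax) ha0 ha1 hb0 (L+1)
      (Mval a b w pmin pmax L)
    have h2 := Wf_succ (b := b) (w := w) (pmax := pmax) (M := Mval a b w pmin pmax L)
      ha0 ha1 hpa hpb L
    have h3 : Mval a b w pmin pmax (L+1) - Mval a b w pmin pmax L ≤ 0 :=
      sub_nonpos.mpr (hL (L+1))
    have h4 := kap_pos (a := a) (b := b) ha0 ha1 hb0 (L+1) 1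
    have h5 : (Mval a b w pmin pmax (L+1) - Mval a b w pmin pmax L)
        * (1 + kap a b (L+1) 1) ≤ 0 :=
      mul_nonpos_of_nonpos_of_nonneg h3 (by linarith)
    have h6 : 0 < b^L*(b-a) := mul_pos (pow_pos hb0 L) (by linarith)
    nlinarith [h1, h2, h5, h6, hM0]
  · intro hL1
    obtain ⟨n, rfl⟩ : ∃ n, L = n+1 := ⟨L-1, by omega⟩
    have h1 := master (w := w) (pmin := pmin) (pmax := pmax) ha0 ha1 hb0 n
      (Mval a b w pmin pmax (n+1))
    have h2 := Wf_succ (b := b) (w := w) (pmax := pmax) (M := Mval a b w pmin pmax (n+1))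
      ha0 ha1 hpa hpb n
    have h3 : Mval a b w pmin pmax n - Mval a b w pmin pmax (n+1) ≤ 0 :=
      sub_nonpos.mpr (hL n)
    have h4 := kap_pos (a := a) (b := b) ha0 ha1 hb0 n 1
    have h5 : (Mval a b w pmin pmax n - Mval a b w pmin pmax (n+1))
        * (1 + kap a b n 1) ≤ 0 :=
      mul_nonpos_of_nonpos_of_nonneg h3 (by linarith)
    have h6 : 0 < b^n*(b-a) := mul_pos (pow_pos hb0 n) (by linarith)
    nlinarith [h1, h2, h5, h6, hM0]

lemma hseq_thresh_le (ρ : ℕ → ℝ) (L : ℕ) (ha0 : 0 < a) (hab : a ≤ b)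
    (hρ : ∀ i, 1 ≤ i → ρ i = if i ≤ L then b else a) :
    ∀ i, hseq ρ i ≤ (b/a)^L * a^i := by
  have hba1 : (1:ℝ) ≤ b/a := (one_le_div ha0).mpr hab
  have hbpos : 0 < b := lt_of_lt_of_le ha0 hab
  have key : ∀ i, hseq ρ i ≤ (b/a)^(min i L) * a^i := by
    intro i
    induction i with
    | zero => simp [hseq_zero]
    | succ i ih =>
        rw [hseq_succ, hρ (i+1) (by omega)]
        rcases le_or_gt (i+1) L with h | h
        · rw [if_pos h]
          have hmin1 : min (i+1) L = i+1 := min_eq_left h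
          have hmin2 : min i L = i := min_eq_left (by omega)
          rw [hmin1]
          rw [hmin2] at ih
          calc hseq ρ i * b ≤ ((b/a)^i * a^i) * b :=
                mul_le_mul_of_nonneg_right ih hbpos.le
            _ = ((b/a)^i * a^i) * ((b/a)*a) := by
                rw [div_mul_cancel₀ b (ne_of_gt ha0)]
            _ = (b/a)^(i+1) * a^(i+1) := by
                rw [pow_succ, pow_succ]
                ring
        · rw [if_neg (by omega)]
          have hmin : min (i+1) L = min i L := by omega
          rw [hmin]
          calc hseq ρ i * a ≤ ((b/a)^(min i L) * a^i) * a :=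
                mul_le_mul_of_nonneg_right ih ha0.le
            _ = (b/a)^(min i L) * a^(i+1) := by rw [pow_succ]; ring
  intro i
  have h2 : (b/a)^(min i L) ≤ (b/a)^L := pow_le_pow_right₀ hba1 (min_le_right _ _)
  exact le_trans (key i)
    (mul_le_mul_of_nonneg_right h2 (pow_nonneg ha0.le i))

lemma summable_thresh (ρ : ℕ → ℝ) (L : ℕ) (ha0 : 0 < a) (ha1 : a < 1) (hab : a ≤ b)
    (hρ : ∀ i, 1 ≤ i → ρ i = if i ≤ L then b else a) :
    Summable (hseq ρ) ∧ Summable (fun i : ℕ => (i:ℝ) * hseq ρ i) := by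
  have hbd := hseq_thresh_le ρ L ha0 hab hρ
  have hρpos : ∀ i, 1 ≤ i → 0 < ρ i := by
    intro i hi
    rw [hρ i hi]
    split
    · linarith
    · exact ha0
  have hpos := hseq_pos ρ hρpos
  constructor
  · refine Summable.of_nonneg_of_le (fun i => (hpos i).le) hbd ?_
    exact (summable_geometric_of_lt_one ha0.le ha1).mul_left _
  · have hg : Summable (fun i : ℕ => (b/a)^L * ((i:ℝ) * a^i)) := by
      have h1 := summable_pow_mul_geometric_of_norm_lt_one (R := ℝ) 1
        (r := a) (by rw [Real.norm_eq_abs, abs_of_pos ha0]; exact ha1)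
      refine Summable.mul_left _ (h1.congr (fun i => ?_))
      rw [pow_one]
    refine Summable.of_nonneg_of_le (fun i => ?_) (fun i => ?_) hg
    · exact mul_nonneg (Nat.cast_nonneg i) (hpos i).le
    · have h3 := mul_le_mul_of_nonneg_left (hbd i) (Nat.cast_nonneg i : (0:ℝ) ≤ (i:ℝ))
      calc (i:ℝ) * hseq ρ i ≤ (i:ℝ) * ((b/a)^L * a^i) := h3
        _ = (b/a)^L * ((i:ℝ) * a^i) := by ring

end Layer6


/-- Under Assumption 1 (linear price sensitivity), there exists
a pricing policy maximizing the relaxed objective `C_rel` over all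
positive-recurrent policies with values in `[p_min, p_max]` (and `p_0 = p_max`)
that has bang-bang form: for some `ℓ* ∈ ℕ ∪ {∞}` and `p* ∈ [p_min, p_max]`,
`p_i = p_max` for `i < ℓ*`, `p_i = p*` for `i = ℓ*`, and `p_i = p_min` for
`i > ℓ*`. -/
theorem stmt1
    (lam alpha beta wt pmin pmax : ℝ)
    (hlam : 0 < lam) (halpha : 0 < alpha) (hbeta : 0 < beta) (hwt : 0 < wt)
    (hpmin : 0 < pmin) (hpminmax : pmin < pmax)
    (hmumax : lam < beta - alpha * pmin)
    (hmumin : 0 < beta - alpha * pmax) :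
    ∃ popt : ℕ → ℝ, Admissible lam beta alpha pmin pmax popt ∧
      (∃ ℓ : ℕ∞, ∃ pstar ∈ Set.Icc pmin pmax, ∀ i : ℕ, 1 ≤ i →
        (((i : ℕ∞) < ℓ → popt i = pmax) ∧
         ((i : ℕ∞) = ℓ → popt i = pstar) ∧
         (ℓ < (i : ℕ∞) → popt i = pmin))) ∧
      ∀ q : ℕ → ℝ, Admissible lam beta alpha pmin pmax q →
        CrelE lam beta alpha wt q ≤ CrelE lam beta alpha wt popt := by
  have hμmax : 0 < beta - alpha*pmin := lt_trans hlam hmumax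
  have hμmin : 0 < beta - alpha*pmax := hmumin
  have hμlt : beta - alpha*pmax < beta - alpha*pmin := by nlinarith
  obtain ⟨a, ha_def⟩ : ∃ x : ℝ, x = lam/(beta - alpha*pmin) := ⟨_, rfl⟩
  obtain ⟨b, hb_def⟩ : ∃ x : ℝ, x = lam/(beta - alpha*pmax) := ⟨_, rfl⟩
  obtain ⟨w, hw_def⟩ : ∃ x : ℝ, x = wt/lam := ⟨_, rfl⟩
  obtain ⟨beta', hbeta'⟩ : ∃ x : ℝ, x = beta/alpha := ⟨_, rfl⟩
  obtain ⟨lam', hlam'⟩ : ∃ x : ℝ, x = lam/alpha := ⟨_, rfl⟩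
  have ha0 : 0 < a := by rw [ha_def]; exact div_pos hlam hμmax
  have ha1 : a < 1 := by rw [ha_def]; exact (div_lt_one hμmax).mpr hmumax
  have hb0 : 0 < b := by rw [hb_def]; exact div_pos hlam hμmin
  have hab : a < b := by
    rw [ha_def, hb_def]
    exact div_lt_div_of_pos_left hlam hμmin hμlt
  have hw : 0 < w := by rw [hw_def]; exact div_pos hwt hlam
  have hpa : a*beta' - lam' = a*pmin := by
    rw [ha_def, hbeta', hlam']
    field_simp
    ring
  have hpb : b*beta' - lam' = b*pmax := by
    rw [hb_def, hbeta', hlam']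
    field_simp
    ring
  -- properties of induced rhos
  have hmem : ∀ p : ℕ → ℝ, (∀ i, p i ∈ Set.Icc pmin pmax) → ∀ i : ℕ,
      a ≤ rhoOf lam beta alpha p i ∧ rhoOf lam beta alpha p i ≤ b := by
    intro p hp i
    obtain ⟨h1, h2⟩ := Set.mem_Icc.mp (hp i)
    have hd1 : 0 < beta - alpha * p i := by nlinarith
    constructor
    · rw [ha_def]
      unfold rhoOf
      exact div_le_div_of_nonneg_left (le_of_lt hlam) hd1 (by nlinarith)
    · rw [hb_def]
      unfold rhoOf
      exact div_le_div_of_nonneg_left (le_of_lt hlam) hμmin (by nlinarith)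
  have hρpos : ∀ p : ℕ → ℝ, (∀ i, p i ∈ Set.Icc pmin pmax) → ∀ i : ℕ, 1 ≤ i →
      0 < rhoOf lam beta alpha p i :=
    fun p hp i _ => lt_of_lt_of_le ha0 (hmem p hp i).1
  have hid : ∀ p : ℕ → ℝ, (∀ i, p i ∈ Set.Icc pmin pmax) → ∀ i : ℕ, 1 ≤ i →
      rhoOf lam beta alpha p i * p i = beta' * rhoOf lam beta alpha p i - lam' := by
    intro p hp i _
    obtain ⟨h1, h2⟩ := Set.mem_Icc.mp (hp i)
    have hd1 : beta - alpha * p i ≠ 0 := ne_of_gt (by nlinarith)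
    rw [hbeta', hlam']
    unfold rhoOf
    field_simp
    ring
  -- optimal threshold
  obtain ⟨L, hL⟩ := exists_argmax ha0 ha1 hb0 hab hw hpmin hpminmax
  obtain ⟨hsgn1, hsgn2⟩ := sign_conditions ha0 ha1 hb0 hab hpa hpb L hL
  obtain ⟨popt, hpopt⟩ : ∃ p : ℕ → ℝ, p = fun i => if i ≤ L then pmax else pmin := ⟨_, rfl⟩
  have hpopt_val : ∀ i, popt i = if i ≤ L then pmax else pmin := fun i => by rw [hpopt]
  have hpmem : ∀ i, popt i ∈ Set.Icc pmin pmax := by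
    intro i
    rw [hpopt_val]
    split
    · exact ⟨le_of_lt hpminmax, le_rfl⟩
    · exact ⟨le_rfl, le_of_lt hpminmax⟩
  have hp0 : popt 0 = pmax := by rw [hpopt_val]; simp
  have hρp : ∀ i, 1 ≤ i → rhoOf lam beta alpha popt i = if i ≤ L then b else a := by
    intro i _
    unfold rhoOf
    rw [hpopt_val]
    split
    · rw [hb_def]
    · rw [ha_def]
  obtain ⟨hsum_p, hisum_p⟩ :=
    summable_thresh (rhoOf lam beta alpha popt) L ha0 ha1 (le_of_lt hab) hρp
  have hbell := bellman (pmax := pmax) ha0 ha1 hb0 hw hpa hpb L hsgn1 hsgn2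
  obtain ⟨C, hC⟩ := Wf_growth (b := b) (pmax := pmax)
    (M := Mval a b w pmin pmax L) ha0 ha1 (le_of_lt hw) L
  have hmaster0 : (pmax - Mval a b w pmin pmax L)
      + Wf a b w pmin pmax (Mval a b w pmin pmax L) L 1 = 0 := by
    have h := master (w := w) (pmin := pmin) (pmax := pmax) ha0 ha1 hb0 L
      (Mval a b w pmin pmax L)
    rwa [sub_self, zero_mul] at h
  have hrec : ∀ k, 1 ≤ k → Wf a b w pmin pmax (Mval a b w pmin pmax L) L k
      = rhoOf lam beta alpha popt k * (beta' - w*(k:ℝ) - Mval a b w pmin pmax L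
          + Wf a b w pmin pmax (Mval a b w pmin pmax L) L (k+1)) - lam' := by
    intro k hk
    rw [hρp k hk]
    have h := Wf_eq_c (a := a) (b := b) (w := w) (pmin := pmin) (pmax := pmax)
      (beta' := beta') (lam' := lam') (M := Mval a b w pmin pmax L)
      (ne_of_lt ha1) hpa hpb L hk
    rw [h, cfun]
  have hval_p : ∑' i, hseq (rhoOf lam beta alpha popt) i
      * (popt i - w*(i:ℝ) - Mval a b w pmin pmax L) = 0 := by
    have h := tsum_eq_of_rec (a := a) (pmin := pmin)
      (Wf a b w pmin pmax (Mval a b w pmin pmax L) L)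
      (rhoOf lam beta alpha popt) popt C ha0 (hρpos popt hpmem)
      (hid popt hpmem) hp0 hrec hC hsum_p hisum_p (le_of_lt hw)
      (fun i => Set.mem_Icc.mp (hpmem i)) hpmin
    exact h.trans hmaster0
  have hsplit_p := tsum_split (w := w) (M := Mval a b w pmin pmax L)
    (rhoOf lam beta alpha popt) popt (hρpos popt hpmem) hsum_p hisum_p
    (summable_hq (pmin := pmin) (pmax := pmax) (rhoOf lam beta alpha popt) popt
      hsum_p (hρpos popt hpmem) (fun i => Set.mem_Icc.mp (hpmem i)) hpmin)
  have hSp1 : 1 ≤ ∑' i, hseq (rhoOf lam beta alpha popt) i :=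
    one_le_tsum_hseq _ (hρpos popt hpmem) hsum_p
  have hvalue_p : CrelE lam beta alpha wt popt
      = ((Mval a b w pmin pmax L : ℝ) : EReal) := by
    rw [crelE_eq_real (pmin := pmin) (pmax := pmax) lam beta alpha wt popt
      (rhoOf lam beta alpha popt) rfl hlam hwt hpmin (hρpos popt hpmem)
      (fun i => Set.mem_Icc.mp (hpmem i)) hsum_p hisum_p]
    rw [EReal.coe_eq_coe_iff, ← hw_def, div_eq_iff (by linarith : (∑' i, hseq (rhoOf lam beta alpha popt) i) ≠ 0)]
    linarith [hsplit_p, hval_p]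
  refine ⟨popt, ⟨hpmem, hp0, hsum_p⟩, ⟨(L : ℕ∞), pmax, ⟨le_of_lt hpminmax, le_rfl⟩, ?_⟩, ?_⟩
  · intro i _
    refine ⟨fun h => ?_, fun h => ?_, fun h => ?_⟩
    · have hiL : i < L := by exact_mod_cast h
      rw [hpopt_val, if_pos (le_of_lt hiL)]
    · have hiL : i = L := by exact_mod_cast h
      rw [hpopt_val, if_pos (le_of_eq hiL)]
    · have hiL : L < i := by exact_mod_cast h
      rw [hpopt_val, if_neg (by omega)]
  · intro q hq
    obtain ⟨hqmem, hq0, hqsum⟩ := hq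
    rw [hvalue_p]
    by_cases hiq : Summable (fun i : ℕ => (i:ℝ) * hseq (rhoOf lam beta alpha q) i)
    · rw [crelE_eq_real (pmin := pmin) (pmax := pmax) lam beta alpha wt q
        (rhoOf lam beta alpha q) rfl hlam hwt hpmin (hρpos q hqmem)
        (fun i => Set.mem_Icc.mp (hqmem i)) hqsum hiq]
      rw [EReal.coe_le_coe_iff]
      have hkey := tsum_le_of_bellman (pmin := pmin)
        (Wf a b w pmin pmax (Mval a b w pmin pmax L) L)
        (rhoOf lam beta alpha q) q C ha0 (fun i _ => hmem q hqmem i)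
        (hid q hqmem) hq0 hbell hC hqsum hiq (le_of_lt hw)
        (fun i => Set.mem_Icc.mp (hqmem i)) hpmin
      have hsplit_q := tsum_split (w := w) (M := Mval a b w pmin pmax L)
        (rhoOf lam beta alpha q) q (hρpos q hqmem) hqsum hiq
        (summable_hq (pmin := pmin) (pmax := pmax) (rhoOf lam beta alpha q) q
          hqsum (hρpos q hqmem) (fun i => Set.mem_Icc.mp (hqmem i)) hpmin)
      have hSq : 1 ≤ ∑' i, hseq (rhoOf lam beta alpha q) i :=
        one_le_tsum_hseq _ (hρpos q hqmem) hqsum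
      rw [← hw_def, div_le_iff₀ (by linarith : (0:ℝ) < ∑' i, hseq (rhoOf lam beta alpha q) i)]
      linarith [hkey, hmaster0, hsplit_q]
    · rw [crelE_bot lam beta alpha wt q (rhoOf lam beta alpha q) rfl hlam hwt
        (hρpos q hqmem) hqsum hiq]
      exact bot_le
end

section
/- Let 0 < ρ̲ < ρ̄ with ρ̲ < 1 and ρ̲/(1 − ρ̲) ≤ C. Consider the optimization: minimize π_0 over all sequences (ρ_i)_{i≥1} with ρ_i ∈ [ρ̲, ρ̄] for all i, subject to ∑_j h_j < ∞ and ∑_{i=0}^∞ i π_i ≤ C. Then an optimal solution exists of bang-bang form: there exist ℓ* ∈ ℕ ∪ {∞} and r* ∈ [ρ̲, ρ̄] such that ρ_i = ρ̄ for i < ℓ*, ρ_i = r* for i = ℓ*, and ρ_i = ρ̲ for i > ℓ*. -/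
open scoped ENNReal


/-- Feasibility for the optimization: `ρ_i ∈ [ρ̲, ρ̄]` for `i ≥ 1`, positive
recurrence `∑_j h_j < ∞`, and the moment constraint `∑_i i π_i ≤ C`
(with the series converging). -/
def Feasible (rlo rhi C : ℝ) (ρ : ℕ → ℝ) : Prop :=
  (∀ i : ℕ, 1 ≤ i → ρ i ∈ Set.Icc rlo rhi) ∧
    Summable (hseq ρ) ∧
    Summable (fun i : ℕ => (i : ℝ) * piseq ρ i) ∧
    (∑' i : ℕ, (i : ℝ) * piseq ρ i) ≤ C

namespace S2






lemma hseq_zero (ρ : ℕ → ℝ) : hseq ρ 0 = 1 := by simp [hseq]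

lemma hseq_succ (ρ : ℕ → ℝ) (j : ℕ) : hseq ρ (j+1) = hseq ρ j * ρ (j+1) :=
  Finset.prod_Icc_succ_top (Nat.le_add_left 1 j) ρ

lemma hseq_pos {ρ : ℕ → ℝ} (h : ∀ i, 1 ≤ i → 0 < ρ i) (j : ℕ) : 0 < hseq ρ j := by
  induction j with
  | zero => simp [hseq_zero]
  | succ n ih => rw [hseq_succ]; exact mul_pos ih (h _ (Nat.le_add_left 1 n))

lemma hseq_le_pow {ρ : ℕ → ℝ} {a : ℝ} (hpos : ∀ i, 1 ≤ i → 0 < ρ i)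
    (h : ∀ i, 1 ≤ i → ρ i ≤ a) (j : ℕ) : hseq ρ j ≤ a ^ j := by
  have ha : 0 ≤ a := le_trans (hpos 1 le_rfl).le (h 1 le_rfl)
  induction j with
  | zero => simp [hseq_zero]
  | succ n ih =>
    rw [hseq_succ, pow_succ]
    exact mul_le_mul ih (h _ (Nat.le_add_left 1 n)) (hpos _ (Nat.le_add_left 1 n)).le
      (pow_nonneg ha n)

lemma pow_le_hseq {ρ : ℕ → ℝ} {b : ℝ} (hb : 0 ≤ b)
    (h : ∀ i, 1 ≤ i → b ≤ ρ i) (j : ℕ) : b ^ j ≤ hseq ρ j := by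
  induction j with
  | zero => simp [hseq_zero]
  | succ n ih =>
    rw [hseq_succ, pow_succ]
    exact mul_le_mul ih (h _ (Nat.le_add_left 1 n)) hb (le_trans (pow_nonneg hb n) ih)







lemma ite_tail (F : ℕ → ℝ≥0∞) (p : ℕ) :
    (∑' j : ℕ, if p < j then F j else 0) = ∑' j : ℕ, F (j + (p+1)) := by
  have hinj : Function.Injective (fun j : ℕ => j + (p+1)) := by
    intro a b h; simpa using h
  have hsupp : Function.support (fun j => if p < j then F j else 0)
      ⊆ Set.range (fun j : ℕ => j + (p+1)) := by
    intro x hx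
    rcases lt_or_ge p x with h | h
    · exact ⟨x - (p+1), by simp; omega⟩
    · simp [Function.mem_support, if_neg (not_lt.mpr h)] at hx
  have := Function.Injective.tsum_eq hinj hsupp
  rw [← this]
  exact tsum_congr fun j => if_pos (by omega)

lemma ennreal_fubini (F : ℕ → ℝ≥0∞) :
    ∑' j : ℕ, (j : ℝ≥0∞) * F j = ∑' p : ℕ, ∑' j : ℕ, F (j + (p+1)) := by
  have h1 : ∀ j : ℕ, (j : ℝ≥0∞) * F j = ∑' p : ℕ, if p < j then F j else 0 := by
    intro j
    rw [tsum_eq_sum (s := Finset.range j) (fun p hp => if_neg (by simpa using hp))]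
    rw [Finset.sum_ite_of_true (fun p hp => by simpa using hp)]
    simp [Finset.sum_const, nsmul_eq_mul]
  calc ∑' j : ℕ, (j : ℝ≥0∞) * F j = ∑' j : ℕ, ∑' p : ℕ, if p < j then F j else 0 := tsum_congr h1
    _ = ∑' p : ℕ, ∑' j : ℕ, if p < j then F j else 0 := ENNReal.tsum_comm
    _ = ∑' p : ℕ, ∑' j : ℕ, F (j + (p+1)) := tsum_congr (ite_tail F)

/-- Fubini identity: `∑ j, j f j  =  ∑_{p≥0} (tail sum from p+1)`, with summability. -/
lemma fubini_tails {f : ℕ → ℝ} (h0 : ∀ n, 0 ≤ f n) (hf : Summable f)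
    (hmf : Summable fun j : ℕ => (j : ℝ) * f j) :
    Summable (fun p => ∑' j : ℕ, f (j + (p+1))) ∧
      (∑' j : ℕ, (j : ℝ) * f j) = ∑' p : ℕ, ∑' j : ℕ, f (j + (p+1)) := by
  set F : ℕ → ℝ≥0∞ := fun j => ENNReal.ofReal (f j) with hF
  have htail : ∀ p : ℕ, Summable fun j => f (j + (p+1)) :=
    fun p => (summable_nat_add_iff (p+1)).mpr hf
  have hA : ENNReal.ofReal (∑' j : ℕ, (j : ℝ) * f j) = ∑' j : ℕ, (j : ℝ≥0∞) * F j := by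
    rw [ENNReal.ofReal_tsum_of_nonneg (fun n => mul_nonneg (Nat.cast_nonneg n) (h0 n)) hmf]
    exact tsum_congr fun j => by
      rw [ENNReal.ofReal_mul (Nat.cast_nonneg j), ENNReal.ofReal_natCast]
  have hB : ∀ p : ℕ, ENNReal.ofReal (∑' j : ℕ, f (j + (p+1))) = ∑' j : ℕ, F (j + (p+1)) :=
    fun p => ENNReal.ofReal_tsum_of_nonneg (fun n => h0 _) (htail p)
  have key : ENNReal.ofReal (∑' j : ℕ, (j : ℝ) * f j)
      = ∑' p : ℕ, ENNReal.ofReal (∑' j : ℕ, f (j + (p+1))) := by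
    rw [hA, ennreal_fubini]
    exact tsum_congr fun p => (hB p).symm
  have hTnn : ∀ p, 0 ≤ ∑' j : ℕ, f (j + (p+1)) := fun p => tsum_nonneg fun j => h0 _
  have hNnn : 0 ≤ ∑' j : ℕ, (j : ℝ) * f j := tsum_nonneg fun j => mul_nonneg (by positivity) (h0 j)
  have hsum : Summable (fun p => ∑' j : ℕ, f (j + (p+1))) := by
    apply summable_of_sum_range_le hTnn
    intro n
    have : ENNReal.ofReal (∑ p ∈ Finset.range n, ∑' j : ℕ, f (j + (p+1)))
        ≤ ENNReal.ofReal (∑' j : ℕ, (j : ℝ) * f j) := by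
      rw [key, ENNReal.ofReal_sum_of_nonneg (fun p _ => hTnn p)]
      exact ENNReal.sum_le_tsum _
    exact (ENNReal.ofReal_le_ofReal_iff hNnn).mp this
  refine ⟨hsum, ?_⟩
  have : ENNReal.ofReal (∑' j : ℕ, (j : ℝ) * f j)
      = ENNReal.ofReal (∑' p : ℕ, ∑' j : ℕ, f (j + (p+1))) := by
    rw [key, ENNReal.ofReal_tsum_of_nonneg hTnn hsum]
  rwa [ENNReal.ofReal_eq_ofReal_iff hNnn (tsum_nonneg hTnn)] at this






lemma cancel_right {u v w : ℝ} (hw : 0 < w) (h : u * w ≤ v * w) : u ≤ v :=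
  le_of_mul_le_mul_right h hw

/-- If `y` grows (ratio-wise) at least as fast as `x`, then the mean of `y` is
at least the mean of `x` (cross-multiplied form). -/
lemma ratio_mono {x y : ℕ → ℝ} (hx : ∀ j, 0 < x j) (hy : ∀ j, 0 < y j)
    (hstep : ∀ j : ℕ, x (j+1) * y j ≤ x j * y (j+1))
    (hsx : Summable x) (hsy : Summable y)
    (hmx : Summable (fun j : ℕ => (j : ℝ) * x j))
    (hmy : Summable (fun j : ℕ => (j : ℝ) * y j)) :
    (∑' j : ℕ, (j : ℝ) * x j) * (∑' j : ℕ, y j)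
      ≤ (∑' j : ℕ, (j : ℝ) * y j) * (∑' j : ℕ, x j) := by
  set Sx := ∑' j : ℕ, x j with hSx
  set Sy := ∑' j : ℕ, y j with hSy
  -- (a) cross inequality
  have hcross : ∀ j k : ℕ, j ≤ k → x k * y j ≤ x j * y k := by
    intro j k hjk
    induction k, hjk using Nat.le_induction with
    | base => exact le_rfl
    | succ k hk IH =>
      have hm := mul_le_mul (hstep k) IH (mul_pos (hx k) (hy j)).le
        (mul_pos (hx k) (hy (k+1))).le
      have hpos : (0:ℝ) < x k * y k := mul_pos (hx k) (hy k)
      apply cancel_right hpos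
      calc x (k+1) * y j * (x k * y k) = x (k+1) * y k * (x k * y j) := by ring
        _ ≤ x k * y (k+1) * (x j * y k) := hm
        _ = x j * y (k+1) * (x k * y k) := by ring
  -- partial sums
  set A : ℕ → ℝ := fun p => ∑ j ∈ Finset.range p, x j with hA
  set B : ℕ → ℝ := fun p => ∑ j ∈ Finset.range p, y j with hB
  have hApos : ∀ p, 1 ≤ p → 0 < A p := fun p hp =>
    Finset.sum_pos (fun j _ => hx j) (by simp [Finset.nonempty_range_iff]; omega)
  have hBpos : ∀ p, 1 ≤ p → 0 < B p := fun p hp =>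
    Finset.sum_pos (fun j _ => hy j) (by simp [Finset.nonempty_range_iff]; omega)
  have hstep2 : ∀ p : ℕ, A (p+1) * B p ≤ A p * B (p+1) := by
    intro p
    have key : x p * B p ≤ A p * y p := by
      have : ∀ j ∈ Finset.range p, x p * y j ≤ x j * y p :=
        fun j hj => hcross j p (le_of_lt (Finset.mem_range.mp hj))
      calc x p * B p = ∑ j ∈ Finset.range p, x p * y j := by rw [hB]; exact Finset.mul_sum ..
        _ ≤ ∑ j ∈ Finset.range p, x j * y p := Finset.sum_le_sum this
        _ = A p * y p := by rw [hA]; rw [← Finset.sum_mul]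
    have hAe : A (p+1) = A p + x p := by simp [hA, Finset.sum_range_succ]
    have hBe : B (p+1) = B p + y p := by simp [hB, Finset.sum_range_succ]
    rw [hAe, hBe]; nlinarith [key]
  have hAB : ∀ p q : ℕ, p ≤ q → A q * B p ≤ A p * B q := by
    intro p q hpq
    induction q, hpq using Nat.le_induction with
    | base => exact le_of_eq (by ring)
    | succ q hq IH =>
      rcases Nat.eq_zero_or_pos p with rfl | hp
      · simp [hA, hB]
      · have hq1 : 1 ≤ q := le_trans hp hq
        have hm := mul_le_mul (hstep2 q) IH
          (mul_pos (hApos q hq1) (hBpos p hp)).le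
          (mul_pos (hApos q hq1) (hBpos (q+1) (by omega))).le
        have hpos : (0:ℝ) < A q * B q := mul_pos (hApos q hq1) (hBpos q hq1)
        apply cancel_right hpos
        calc A (q+1) * B p * (A q * B q) = A (q+1) * B q * (A q * B p) := by ring
          _ ≤ A q * B (q+1) * (A p * B q) := hm
          _ = A p * B (q+1) * (A q * B q) := by ring
  -- (c) limits
  have hlimA : Filter.Tendsto A Filter.atTop (nhds Sx) := hsx.hasSum.tendsto_sum_nat
  have hlimB : Filter.Tendsto B Filter.atTop (nhds Sy) := hsy.hasSum.tendsto_sum_nat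
  have hc : ∀ p : ℕ, Sx * B p ≤ A p * Sy := by
    intro p
    have h1 : Filter.Tendsto (fun q => A q * B p) Filter.atTop (nhds (Sx * B p)) :=
      hlimA.mul_const _
    have h2 : Filter.Tendsto (fun q => A p * B q) Filter.atTop (nhds (A p * Sy)) :=
      hlimB.const_mul _
    exact le_of_tendsto_of_tendsto h1 h2 (Filter.eventually_atTop.mpr ⟨p, fun q hq => hAB p q hq⟩)
  -- (d) tails
  set Tx : ℕ → ℝ := fun p => ∑' j : ℕ, x (j + p) with hTx
  set Ty : ℕ → ℝ := fun p => ∑' j : ℕ, y (j + p) with hTy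
  have hsplitx : ∀ p, A p + Tx p = Sx := fun p => Summable.sum_add_tsum_nat_add p hsx
  have hsplity : ∀ p, B p + Ty p = Sy := fun p => Summable.sum_add_tsum_nat_add p hsy
  have hd : ∀ p : ℕ, Tx p * Sy ≤ Ty p * Sx := by
    intro p
    have h1 := hc p
    have h2 := hsplitx p
    have h3 := hsplity p
    have e1 : Tx p = Sx - A p := by linarith
    have e2 : Ty p = Sy - B p := by linarith
    rw [e1, e2]
    nlinarith [h1]
  -- (e) conclude
  obtain ⟨hsumTx, hNx⟩ := fubini_tails (fun n => (hx n).le) hsx hmx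
  obtain ⟨hsumTy, hNy⟩ := fubini_tails (fun n => (hy n).le) hsy hmy
  rw [hNx, hNy]
  rw [← tsum_mul_right, ← tsum_mul_right]
  exact Summable.tsum_le_tsum (fun p => hd (p+1)) (hsumTx.mul_right _) (hsumTy.mul_right _)



/-- the bang-bang rate sequence -/
def bb (a b : ℝ) (l : ℕ) (r : ℝ) : ℕ → ℝ := fun i => if i ≤ l then a else if i = l + 1 then r else b

noncomputable def SS (ρ : ℕ → ℝ) : ℝ := ∑' j : ℕ, hseq ρ j
noncomputable def NN (ρ : ℕ → ℝ) : ℝ := ∑' j : ℕ, (j : ℝ) * hseq ρ j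

section
variable {a b : ℝ}

lemma bb_junction (a b : ℝ) (l : ℕ) : bb a b l a = bb a b (l+1) b := by
  funext i
  unfold bb
  split_ifs <;> first | rfl | omega

lemma bb_mem (hb0 : 0 < b) (hba : b < a) {r : ℝ} (hr : r ∈ Set.Icc b a) (l : ℕ) :
    ∀ i, 1 ≤ i → bb a b l r i ∈ Set.Icc b a := by
  intro i _
  unfold bb
  split_ifs with h1 h2
  · exact ⟨hba.le, le_rfl⟩
  · exact hr
  · exact ⟨le_rfl, hba.le⟩

lemma hseq_bb (hb0 : 0 < b) (hba : b < a) {r : ℝ} (l : ℕ) (j : ℕ) :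
    hseq (bb a b l r) j = if j ≤ l then a ^ j else a ^ l * r * b ^ (j - (l+1)) := by
  induction j with
  | zero => simp [hseq_zero]
  | succ n ih =>
    rw [hseq_succ, ih]
    rcases Nat.lt_trichotomy n l with h | h | h
    · rw [if_pos h.le, if_pos (by omega)]
      rw [show bb a b l r (n+1) = a from if_pos (by omega)]
      ring
    · subst h
      rw [if_pos le_rfl, if_neg (by omega)]
      rw [show bb a b n r (n+1) = r from by unfold bb; rw [if_neg (by omega), if_pos rfl]]
      simp
    · rw [if_neg (by omega), if_neg (by omega)]
      rw [show bb a b l r (n+1) = b from by unfold bb; rw [if_neg (by omega), if_neg (by omega)]]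
      rw [show n + 1 - (l+1) = (n - (l+1)) + 1 from by omega, pow_succ]
      ring

lemma hseq_bb_tail (hb0 : 0 < b) (hba : b < a) {r : ℝ} (l : ℕ) (k : ℕ) :
    hseq (bb a b l r) (k + (l+1)) = a ^ l * r * b ^ k := by
  rw [hseq_bb hb0 hba, if_neg (by omega), Nat.add_sub_cancel]

lemma summable_hseq_bb (hb0 : 0 < b) (hb1 : b < 1) (hba : b < a) {r : ℝ} (l : ℕ) :
    Summable (hseq (bb a b l r)) := by
  apply (summable_nat_add_iff (l+1)).mp
  have : (fun k : ℕ => hseq (bb a b l r) (k + (l+1))) = fun k : ℕ => a ^ l * r * b ^ k := by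
    funext k; exact hseq_bb_tail hb0 hba l k
  rw [this]
  exact (summable_geometric_of_lt_one hb0.le hb1).mul_left _

lemma summable_mul_hseq_bb (hb0 : 0 < b) (hb1 : b < 1) (hba : b < a) {r : ℝ} (l : ℕ) :
    Summable (fun j : ℕ => (j : ℝ) * hseq (bb a b l r) j) := by
  apply (summable_nat_add_iff (l+1)).mp
  have : (fun k : ℕ => ((k + (l+1) : ℕ) : ℝ) * hseq (bb a b l r) (k + (l+1)))
      = fun k : ℕ => (a ^ l * r) * ((k:ℝ) * b ^ k) + ((l+1 : ℝ) * (a ^ l * r)) * b ^ k := by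
    funext k; rw [hseq_bb_tail hb0 hba l k]; push_cast; ring
  rw [this]
  have hnb : ‖b‖ < 1 := by rw [Real.norm_eq_abs, abs_of_pos hb0]; exact hb1
  have h1 : Summable (fun k : ℕ => (k:ℝ) * b ^ k) := by
    have := summable_pow_mul_geometric_of_norm_lt_one 1 hnb
    simpa using this
  exact (h1.mul_left _).add ((summable_geometric_of_lt_one hb0.le hb1).mul_left _)

noncomputable def UU (a : ℝ) (l : ℕ) : ℝ := ∑ j ∈ Finset.range (l+1), a ^ j
noncomputable def QQ (a : ℝ) (l : ℕ) : ℝ := ∑ j ∈ Finset.range (l+1), (j:ℝ) * a ^ j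
noncomputable def VV (a b : ℝ) (l : ℕ) : ℝ := ∑' k : ℕ, a ^ l * b ^ k
noncomputable def WW (a b : ℝ) (l : ℕ) : ℝ := ∑' k : ℕ, ((k : ℝ) + (l+1)) * (a ^ l * b ^ k)

lemma summable_VV (hb0 : 0 < b) (hb1 : b < 1) (l : ℕ) :
    Summable (fun k : ℕ => a ^ l * b ^ k) :=
  (summable_geometric_of_lt_one hb0.le hb1).mul_left _

lemma summable_WW (hb0 : 0 < b) (hb1 : b < 1) (l : ℕ) :
    Summable (fun k : ℕ => ((k : ℝ) + (l+1)) * (a ^ l * b ^ k)) := by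
  have hnb : ‖b‖ < 1 := by rw [Real.norm_eq_abs, abs_of_pos hb0]; exact hb1
  have h1 : Summable (fun k : ℕ => (k:ℝ) * b ^ k) := by
    have := summable_pow_mul_geometric_of_norm_lt_one 1 hnb
    simpa using this
  have : (fun k : ℕ => ((k : ℝ) + (l+1)) * (a ^ l * b ^ k))
      = fun k : ℕ => a ^ l * ((k:ℝ) * b ^ k) + ((l+1 : ℝ) * a ^ l) * b ^ k := by
    funext k; ring
  rw [this]
  exact (h1.mul_left _).add ((summable_geometric_of_lt_one hb0.le hb1).mul_left _)

lemma VV_pos (hb0 : 0 < b) (hb1 : b < 1) (ha0 : 0 < a) (l : ℕ) : 0 < VV a b l := by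
  have := summable_VV (a := a) hb0 hb1 l
  exact Summable.tsum_pos this (fun k => by positivity) 0 (by positivity)

lemma SS_bb (hb0 : 0 < b) (hb1 : b < 1) (hba : b < a) (l : ℕ) (r : ℝ) :
    SS (bb a b l r) = UU a l + r * VV a b l := by
  unfold SS
  rw [← Summable.sum_add_tsum_nat_add (l+1) (summable_hseq_bb hb0 hb1 hba l)]
  congr 1
  · unfold UU
    apply Finset.sum_congr rfl
    intro j hj
    rw [hseq_bb hb0 hba, if_pos (by simp at hj; omega)]
  · unfold VV
    rw [← tsum_mul_left]
    apply tsum_congr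
    intro k
    rw [hseq_bb_tail hb0 hba]
    ring

lemma NN_bb (hb0 : 0 < b) (hb1 : b < 1) (hba : b < a) (l : ℕ) (r : ℝ) :
    NN (bb a b l r) = QQ a l + r * WW a b l := by
  unfold NN
  rw [← Summable.sum_add_tsum_nat_add (l+1) (summable_mul_hseq_bb hb0 hb1 hba l)]
  congr 1
  · unfold QQ
    apply Finset.sum_congr rfl
    intro j hj
    rw [hseq_bb hb0 hba, if_pos (by simp at hj; omega)]
  · unfold WW
    rw [← tsum_mul_left]
    apply tsum_congr
    intro k
    rw [hseq_bb_tail hb0 hba]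
    push_cast
    ring

end


section
variable {a b : ℝ}

lemma hseq_nonneg {ρ : ℕ → ℝ} (h : ∀ i, 1 ≤ i → 0 < ρ i) (j : ℕ) : 0 ≤ hseq ρ j :=
  (hseq_pos h j).le

/-- pointwise rate dominance gives pointwise hseq dominance -/
lemma hseq_mono {ρ τ : ℕ → ℝ} (hρ : ∀ i, 1 ≤ i → 0 < ρ i)
    (hrate : ∀ i, 1 ≤ i → ρ i ≤ τ i) (j : ℕ) : hseq ρ j ≤ hseq τ j := by
  induction j with
  | zero => simp [hseq_zero]
  | succ n ih =>
    rw [hseq_succ, hseq_succ]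
    have h1 := hseq_pos hρ n
    have h2 := hρ (n+1) (Nat.le_add_left 1 n)
    have h3 := hrate (n+1) (Nat.le_add_left 1 n)
    nlinarith

/-- mean monotonicity under pointwise rate dominance (cross-multiplied). -/
lemma mean_mono_rates {ρ τ : ℕ → ℝ} (hρ : ∀ i, 1 ≤ i → 0 < ρ i) (hτ : ∀ i, 1 ≤ i → 0 < τ i)
    (hrate : ∀ i, 1 ≤ i → ρ i ≤ τ i)
    (hsρ : Summable (hseq ρ)) (hsτ : Summable (hseq τ))
    (hmρ : Summable (fun j : ℕ => (j:ℝ) * hseq ρ j))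
    (hmτ : Summable (fun j : ℕ => (j:ℝ) * hseq τ j)) :
    NN ρ * SS τ ≤ NN τ * SS ρ := by
  apply ratio_mono (hseq_pos hρ) (hseq_pos hτ) _ hsρ hsτ hmρ hmτ
  intro j
  rw [hseq_succ, hseq_succ]
  have h1 := hseq_pos hρ j
  have h2 := hseq_pos hτ j
  have h3 := hrate (j+1) (Nat.le_add_left 1 j)
  have h4 := hρ (j+1) (Nat.le_add_left 1 j)
  nlinarith [mul_le_mul_of_nonneg_left h3 (mul_pos h1 h2).le]

lemma SS_pos {ρ : ℕ → ℝ} (hρ : ∀ i, 1 ≤ i → 0 < ρ i) (hsρ : Summable (hseq ρ)) :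
    0 < SS ρ :=
  Summable.tsum_pos hsρ (fun j => (hseq_pos hρ j).le) 0 (by rw [hseq_zero]; norm_num)

lemma SS_mono {ρ τ : ℕ → ℝ} (hρ : ∀ i, 1 ≤ i → 0 < ρ i)
    (hrate : ∀ i, 1 ≤ i → ρ i ≤ τ i) (hsρ : Summable (hseq ρ)) (hsτ : Summable (hseq τ)) :
    SS ρ ≤ SS τ :=
  Summable.tsum_le_tsum (hseq_mono hρ hrate) hsρ hsτ

/-- rates of `bb` are dominated along the path order -/
lemma bb_rates_le (hba : b < a) {l l' : ℕ} {r r' : ℝ} (hr : r ≤ a) (hr' : b ≤ r')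
    (h : l < l' ∨ (l = l' ∧ r ≤ r')) :
    ∀ i, 1 ≤ i → bb a b l r i ≤ bb a b l' r' i := by
  intro i _
  unfold bb
  rcases h with h | ⟨rfl, hrr⟩
  · split_ifs <;> first | rfl | omega | assumption | linarith
  · split_ifs <;> first | rfl | omega | assumption | linarith

lemma bb_rates_le_const (hba : b < a) {l : ℕ} {r : ℝ} (hr : r ≤ a) :
    ∀ i, 1 ≤ i → bb a b l r i ≤ (fun _ => a) i := by
  intro i _
  unfold bb
  split_ifs <;> first | rfl | assumption | exact hba.le

lemma hseq_const (c : ℝ) (j : ℕ) : hseq (fun _ => c) j = c ^ j := by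
  unfold hseq
  rw [Finset.prod_const, Nat.card_Icc]
  simp

lemma summable_hseq_const {c : ℝ} (hc0 : 0 ≤ c) (hc1 : c < 1) :
    Summable (hseq (fun _ : ℕ => c)) := by
  have : hseq (fun _ : ℕ => c) = fun j => c ^ j := funext (hseq_const c)
  rw [this]; exact summable_geometric_of_lt_one hc0 hc1

lemma summable_mul_hseq_const {c : ℝ} (hc0 : 0 ≤ c) (hc1 : c < 1) :
    Summable (fun j : ℕ => (j:ℝ) * hseq (fun _ : ℕ => c) j) := by
  have : (fun j : ℕ => (j:ℝ) * hseq (fun _ : ℕ => c) j) = fun j : ℕ => (j:ℝ) * c ^ j := by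
    funext j; rw [hseq_const]
  rw [this]
  have hnc : ‖c‖ < 1 := by rw [Real.norm_eq_abs, abs_of_nonneg hc0]; exact hc1
  simpa using summable_pow_mul_geometric_of_norm_lt_one 1 hnc

lemma SS_const {c : ℝ} (hc0 : 0 ≤ c) (hc1 : c < 1) : SS (fun _ : ℕ => c) = (1 - c)⁻¹ := by
  unfold SS
  rw [show (fun j : ℕ => hseq (fun _ : ℕ => c) j) = fun j => c ^ j from funext (hseq_const c)]
  exact tsum_geometric_of_lt_one hc0 hc1

lemma NN_const {c : ℝ} (hc0 : 0 ≤ c) (hc1 : c < 1) : NN (fun _ : ℕ => c) = c / (1 - c) ^ 2 := by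
  unfold NN
  have : (fun j : ℕ => (j:ℝ) * hseq (fun _ : ℕ => c) j) = fun j : ℕ => (j:ℝ) * c ^ j := by
    funext j; rw [hseq_const]
  rw [this]
  have hnc : ‖c‖ < 1 := by rw [Real.norm_eq_abs, abs_of_nonneg hc0]; exact hc1
  exact tsum_coe_mul_geometric_of_norm_lt_one hnc

end

section
variable {a b C : ℝ}

lemma piseq_zero (ρ : ℕ → ℝ) : piseq ρ 0 = (SS ρ)⁻¹ := by
  unfold piseq SS
  rw [hseq_zero]
  exact one_div _

lemma feasible_of (hb0 : 0 < b) (hba : b < a) {ρ : ℕ → ℝ}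
    (hmem : ∀ i, 1 ≤ i → ρ i ∈ Set.Icc b a)
    (hs : Summable (hseq ρ)) (hm : Summable (fun j : ℕ => (j:ℝ) * hseq ρ j))
    (hNC : NN ρ ≤ C * SS ρ) : Feasible b a C ρ := by
  have hρpos : ∀ i, 1 ≤ i → 0 < ρ i := fun i hi => lt_of_lt_of_le hb0 (hmem i hi).1
  have hS := SS_pos hρpos hs
  have heq : (fun i : ℕ => (i:ℝ) * piseq ρ i) = fun i : ℕ => ((i:ℝ) * hseq ρ i) * (SS ρ)⁻¹ := by
    funext i
    unfold piseq SS
    ring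
  refine ⟨hmem, hs, ?_, ?_⟩
  · rw [heq]; exact hm.mul_right _
  · rw [heq, tsum_mul_right]
    have : (∑' i : ℕ, (i:ℝ) * hseq ρ i) = NN ρ := rfl
    rw [this, ← div_eq_mul_inv, div_le_iff₀ hS]
    exact hNC

lemma feasible_elim (hb0 : 0 < b) {σ : ℕ → ℝ} (hf : Feasible b a C σ) :
    Summable (fun j : ℕ => (j:ℝ) * hseq σ j) ∧ NN σ ≤ C * SS σ := by
  obtain ⟨hmem, hs, hm, hC⟩ := hf
  have hρpos : ∀ i, 1 ≤ i → 0 < σ i := fun i hi => lt_of_lt_of_le hb0 (hmem i hi).1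
  have hS := SS_pos hρpos hs
  have heq : (fun i : ℕ => (i:ℝ) * hseq σ i) = fun i : ℕ => ((i:ℝ) * piseq σ i) * SS σ := by
    have hS' : (∑' j : ℕ, hseq σ j) ≠ 0 := ne_of_gt hS
    funext i
    unfold piseq SS
    field_simp
  constructor
  · rw [heq]; exact hm.mul_right _
  · have : NN σ = (∑' i : ℕ, (i:ℝ) * piseq σ i) * SS σ := by
      unfold NN
      rw [heq, tsum_mul_right]
    rw [this]
    exact mul_le_mul_of_nonneg_right hC hS.le

/-- The crossing lemma: a bang-bang sequence with the same total mass as `σ`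
has a smaller (unnormalized) first moment. -/
lemma crossing (hb0 : 0 < b) (hb1 : b < 1) (hba : b < a) {σ : ℕ → ℝ}
    (hmemσ : ∀ i, 1 ≤ i → σ i ∈ Set.Icc b a)
    (hsσ : Summable (hseq σ)) (hmσ : Summable (fun j : ℕ => (j:ℝ) * hseq σ j))
    (l : ℕ) {r : ℝ} (hr : r ∈ Set.Icc b a) (heq : SS (bb a b l r) = SS σ) :
    NN (bb a b l r) ≤ NN σ := by
  have ha0 : 0 < a := hb0.trans hba
  have hX : hseq (bb a b l r) = hseq (bb a b l r) := rfl
  have hmemX := bb_mem hb0 hba hr l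
  have hXrpos : ∀ i, 1 ≤ i → 0 < bb a b l r i := fun i hi => lt_of_lt_of_le hb0 (hmemX i hi).1
  have hKrpos : ∀ i, 1 ≤ i → 0 < σ i := fun i hi => lt_of_lt_of_le hb0 (hmemσ i hi).1
  have hXpos : ∀ j, 0 < (hseq (bb a b l r)) j := hseq_pos hXrpos
  have hKpos : ∀ j, 0 < (hseq σ) j := hseq_pos hKrpos
  have hsX : Summable (hseq (bb a b l r)) := summable_hseq_bb hb0 hb1 hba l
  have hmX : Summable (fun j : ℕ => (j:ℝ) * (hseq (bb a b l r)) j) := summable_mul_hseq_bb hb0 hb1 hba l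
  have hXval : ∀ j, j ≤ l → (hseq (bb a b l r)) j = a ^ j := fun j hj => by
    rw [hseq_bb hb0 hba, if_pos hj]
  have hKle : ∀ j, (hseq σ) j ≤ a ^ j :=
    hseq_le_pow hKrpos (fun i hi => (hmemσ i hi).2)
  have hbK : ∀ j, b * (hseq σ) j ≤ (hseq σ) (j+1) := by
    intro j
    rw [hseq_succ]
    have := (hmemσ (j+1) (Nat.le_add_left 1 j)).1
    nlinarith [hKpos j]
  have hXstep : ∀ j, l + 1 ≤ j → (hseq (bb a b l r)) (j+1) = b * (hseq (bb a b l r)) j := by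
    intro j hj
    rw [hseq_succ]
    rw [show bb a b l r (j+1) = b from by unfold bb; rw [if_neg (by omega), if_neg (by omega)]]
    ring
  by_cases hall : ∀ n, (hseq σ) n ≤ (hseq (bb a b l r)) n
  · -- equal sums and pointwise ≥ forces equality
    have hsub : Summable (fun n => (hseq (bb a b l r)) n - (hseq σ) n) := hsX.sub hsσ
    have ht : ∑' n, ((hseq (bb a b l r)) n - (hseq σ) n) = 0 := by
      rw [Summable.tsum_sub hsX hsσ]
      have : SS (bb a b l r) = ∑' n, (hseq (bb a b l r)) n := rfl
      have h2 : SS σ = ∑' n, (hseq σ) n := rfl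
      rw [← this, ← h2, heq, sub_self]
    have hdiff : ∀ n, (hseq (bb a b l r)) n = (hseq σ) n := by
      intro n
      have h1 : (hseq (bb a b l r)) n - (hseq σ) n ≤ ∑' m, ((hseq (bb a b l r)) m - (hseq σ) m) :=
        Summable.le_tsum hsub n (fun m _ => sub_nonneg.mpr (hall m))
      have h2 : 0 ≤ (hseq (bb a b l r)) n - (hseq σ) n := sub_nonneg.mpr (hall n)
      rw [ht] at h1
      linarith
    exact le_of_eq (tsum_congr fun j => by rw [hdiff j])
  · push_neg at hall
    have hex : ∃ n, (hseq (bb a b l r)) n < (hseq σ) n := hall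
    classical
    set m := Nat.find hex with hm
    have hmlt : (hseq (bb a b l r)) m < (hseq σ) m := Nat.find_spec hex
    have hmin : ∀ j, j < m → (hseq σ) j ≤ (hseq (bb a b l r)) j := fun j hj => le_of_not_gt (Nat.find_min hex hj)
    have hml : l + 1 ≤ m := by
      by_contra hc
      push_neg at hc
      have : m ≤ l := by omega
      rw [hXval m this] at hmlt
      exact absurd (hKle m) (not_le.mpr hmlt)
    have htail : ∀ j, m ≤ j → (hseq (bb a b l r)) j ≤ (hseq σ) j := by
      intro j hj
      induction j, hj using Nat.le_induction with
      | base => exact hmlt.le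
      | succ j hj ih =>
        rw [hXstep j (le_trans hml hj)]
        calc b * (hseq (bb a b l r)) j ≤ b * (hseq σ) j := mul_le_mul_of_nonneg_left ih hb0.le
          _ ≤ (hseq σ) (j+1) := hbK j
    have htails : ∀ p : ℕ, (∑' j : ℕ, (hseq (bb a b l r)) (j+p)) ≤ ∑' j : ℕ, (hseq σ) (j+p) := by
      intro p
      rcases le_or_gt p m with hpm | hpm
      · have e1 := Summable.sum_add_tsum_nat_add p hsX
        have e2 := Summable.sum_add_tsum_nat_add p hsσ
        have hpre : ∑ j ∈ Finset.range p, (hseq σ) j ≤ ∑ j ∈ Finset.range p, (hseq (bb a b l r)) j :=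
          Finset.sum_le_sum fun j hj => hmin j (by simp at hj; omega)
        have hSeq : (∑' j : ℕ, (hseq (bb a b l r)) j) = ∑' j : ℕ, (hseq σ) j := heq
        linarith
      · exact Summable.tsum_le_tsum (fun j => htail (j+p) (by omega))
          ((summable_nat_add_iff p).mpr hsX) ((summable_nat_add_iff p).mpr hsσ)
    obtain ⟨hsumTX, hNX⟩ := fubini_tails (fun n => (hXpos n).le) hsX hmX
    obtain ⟨hsumTK, hNK⟩ := fubini_tails (fun n => (hKpos n).le) hsσ hmσ
    unfold NN
    rw [hNX, hNK]
    exact Summable.tsum_le_tsum (fun p => htails (p+1)) hsumTX hsumTK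

end

section
variable {a b C : ℝ}

lemma hseq_eq_of {ρ τ : ℕ → ℝ} (h : ∀ i, 1 ≤ i → ρ i = τ i) : hseq ρ = hseq τ := by
  funext j
  unfold hseq
  exact Finset.prod_congr rfl fun i hi => h i (by simp at hi; omega)

lemma mean_le_transfer {ρ1 ρ2 : ℕ → ℝ} (h1pos : ∀ i, 1 ≤ i → 0 < ρ1 i)
    (h2pos : ∀ i, 1 ≤ i → 0 < ρ2 i) (hrate : ∀ i, 1 ≤ i → ρ1 i ≤ ρ2 i)
    (hs1 : Summable (hseq ρ1)) (hs2 : Summable (hseq ρ2))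
    (hm1 : Summable (fun j : ℕ => (j:ℝ) * hseq ρ1 j))
    (hm2 : Summable (fun j : ℕ => (j:ℝ) * hseq ρ2 j))
    (hN2 : NN ρ2 ≤ C * SS ρ2) : NN ρ1 ≤ C * SS ρ1 := by
  have h := mean_mono_rates h1pos h2pos hrate hs1 hs2 hm1 hm2
  have hS1 := SS_pos h1pos hs1
  have hS2 := SS_pos h2pos hs2
  have h2 : NN ρ2 * SS ρ1 ≤ (C * SS ρ2) * SS ρ1 := mul_le_mul_of_nonneg_right hN2 hS1.le
  apply cancel_right hS2
  calc NN ρ1 * SS ρ2 ≤ NN ρ2 * SS ρ1 := h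
    _ ≤ (C * SS ρ2) * SS ρ1 := h2
    _ = (C * SS ρ1) * SS ρ2 := by ring

lemma UU_le_SS_bb (hb0 : 0 < b) (hb1 : b < 1) (hba : b < a) (l : ℕ) {r : ℝ}
    (hr : r ∈ Set.Icc b a) : UU a l ≤ SS (bb a b l r) := by
  have hpos : ∀ i, 1 ≤ i → 0 < bb a b l r i :=
    fun i hi => lt_of_lt_of_le hb0 (bb_mem hb0 hba hr l i hi).1
  have : UU a l = ∑ j ∈ Finset.range (l+1), hseq (bb a b l r) j := by
    unfold UU
    exact Finset.sum_congr rfl fun j hj => by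
      rw [hseq_bb hb0 hba, if_pos (by simp at hj; omega)]
  rw [this]
  exact Summable.sum_le_tsum _ (fun j _ => (hseq_pos hpos j).le) (summable_hseq_bb hb0 hb1 hba l)

lemma QQ_le_NN_bb (hb0 : 0 < b) (hb1 : b < 1) (hba : b < a) (l : ℕ) {r : ℝ}
    (hr : r ∈ Set.Icc b a) : QQ a l ≤ NN (bb a b l r) := by
  have hpos : ∀ i, 1 ≤ i → 0 < bb a b l r i :=
    fun i hi => lt_of_lt_of_le hb0 (bb_mem hb0 hba hr l i hi).1
  have : QQ a l = ∑ j ∈ Finset.range (l+1), (j:ℝ) * hseq (bb a b l r) j := by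
    unfold QQ
    exact Finset.sum_congr rfl fun j hj => by
      rw [hseq_bb hb0 hba, if_pos (by simp at hj; omega)]
  rw [this]
  exact Summable.sum_le_tsum _ (fun j _ => mul_nonneg (Nat.cast_nonneg j) (hseq_pos hpos j).le)
    (summable_mul_hseq_bb hb0 hb1 hba l)

lemma tendsto_UU (ha0 : 0 ≤ a) (ha1 : a < 1) :
    Filter.Tendsto (fun l => UU a l) Filter.atTop (nhds (SS (fun _ : ℕ => a))) := by
  have hS : SS (fun _ : ℕ => a) = ∑' j : ℕ, a ^ j := by
    unfold SS
    exact tsum_congr fun j => hseq_const a j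
  rw [hS]
  have h1 := (summable_geometric_of_lt_one ha0 ha1).hasSum.tendsto_sum_nat
  exact h1.comp (Filter.tendsto_add_atTop_nat 1)

lemma tendsto_QQ (ha0 : 0 ≤ a) (ha1 : a < 1) :
    Filter.Tendsto (fun l => QQ a l) Filter.atTop (nhds (NN (fun _ : ℕ => a))) := by
  have hN : NN (fun _ : ℕ => a) = ∑' j : ℕ, (j:ℝ) * a ^ j := by
    unfold NN
    exact tsum_congr fun j => by rw [hseq_const]
  rw [hN]
  have hna : ‖a‖ < 1 := by rw [Real.norm_eq_abs, abs_of_nonneg ha0]; exact ha1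
  have hsum : Summable (fun j : ℕ => (j:ℝ) * a ^ j) := by
    simpa using summable_pow_mul_geometric_of_norm_lt_one 1 hna
  exact hsum.hasSum.tendsto_sum_nat.comp (Filter.tendsto_add_atTop_nat 1)

lemma one_le_UU (ha1 : 1 ≤ a) (l : ℕ) : (l:ℝ) + 1 ≤ UU a l := by
  unfold UU
  calc (l:ℝ) + 1 = ∑ _j ∈ Finset.range (l+1), (1:ℝ) := by
        rw [Finset.sum_const, Finset.card_range]; push_cast; ring
    _ ≤ ∑ j ∈ Finset.range (l+1), a ^ j :=
        Finset.sum_le_sum fun j _ => one_le_pow₀ ha1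

/-- key moment lower bound: `K (S - Σ_{j<K} a^j) ≤ N`. -/
lemma moment_lower (hb0 : 0 < b) {σ : ℕ → ℝ} (hmem : ∀ i, 1 ≤ i → σ i ∈ Set.Icc b a)
    (hs : Summable (hseq σ)) (hm : Summable (fun j : ℕ => (j:ℝ) * hseq σ j)) (K : ℕ) :
    (K:ℝ) * (SS σ - ∑ j ∈ Finset.range K, a ^ j) ≤ NN σ := by
  have hpos : ∀ i, 1 ≤ i → 0 < σ i := fun i hi => lt_of_lt_of_le hb0 (hmem i hi).1
  have e1 := Summable.sum_add_tsum_nat_add K hm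
  have e2 := Summable.sum_add_tsum_nat_add K hs
  have t1 : (0:ℝ) ≤ ∑ j ∈ Finset.range K, (j:ℝ) * hseq σ j :=
    Finset.sum_nonneg fun j _ => mul_nonneg (Nat.cast_nonneg j) (hseq_pos hpos j).le
  have hstail : Summable (fun k : ℕ => hseq σ (k + K)) := (summable_nat_add_iff K).mpr hs
  have t2 : (∑' k : ℕ, (K:ℝ) * hseq σ (k + K))
      ≤ ∑' k : ℕ, ((k + K : ℕ):ℝ) * hseq σ (k + K) := by
    apply Summable.tsum_le_tsum _ (hstail.mul_left _) ((summable_nat_add_iff K).mpr hm)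
    intro k
    apply mul_le_mul_of_nonneg_right _ (hseq_pos hpos _).le
    push_cast; linarith
  have t3 : (∑' k : ℕ, (K:ℝ) * hseq σ (k + K))
      = (K:ℝ) * (SS σ - ∑ j ∈ Finset.range K, hseq σ j) := by
    rw [tsum_mul_left]
    congr 1
    have : SS σ = ∑' j : ℕ, hseq σ j := rfl
    linarith [e2]
  have t4 : ∑ j ∈ Finset.range K, hseq σ j ≤ ∑ j ∈ Finset.range K, a ^ j :=
    Finset.sum_le_sum fun j _ => hseq_le_pow hpos (fun i hi => (hmem i hi).2) j
  have hNN : NN σ = ∑ j ∈ Finset.range K, (j:ℝ) * hseq σ j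
      + ∑' k : ℕ, ((k + K : ℕ):ℝ) * hseq σ (k + K) := by
    unfold NN
    linarith [e1]
  nlinarith [Nat.cast_nonneg (α := ℝ) K]

end

end S2

open S2 in
/-- Let `0 < ρ̲ < ρ̄`, `ρ̲ < 1` and `ρ̲/(1-ρ̲) ≤ C`. For the
problem of minimizing `π_0` over all sequences `(ρ_i)_{i≥1}` with
`ρ_i ∈ [ρ̲, ρ̄]`, subject to `∑_j h_j < ∞` and `∑_i i π_i ≤ C`, an optimal
solution exists of bang-bang form: for some `ℓ* ∈ ℕ ∪ {∞}` and
`r* ∈ [ρ̲, ρ̄]`, `ρ_i = ρ̄` for `i < ℓ*`, `ρ_i = r*` for `i = ℓ*`, and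
`ρ_i = ρ̲` for `i > ℓ*`. -/
theorem stmt2 (rlo rhi C : ℝ) (h0 : 0 < rlo) (hlt : rlo < rhi) (h1 : rlo < 1)
    (hC : rlo / (1 - rlo) ≤ C) :
    ∃ ρ : ℕ → ℝ, Feasible rlo rhi C ρ ∧
      (∃ ℓ : ℕ∞, ∃ r ∈ Set.Icc rlo rhi, ∀ i : ℕ, 1 ≤ i →
        (((i : ℕ∞) < ℓ → ρ i = rhi) ∧
         ((i : ℕ∞) = ℓ → ρ i = r) ∧
         (ℓ < (i : ℕ∞) → ρ i = rlo))) ∧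
      ∀ σ : ℕ → ℝ, Feasible rlo rhi C σ → piseq ρ 0 ≤ piseq σ 0 := by
  classical
  have ha0 : 0 < rhi := h0.trans hlt
  have h1b : (0:ℝ) < 1 - rlo := by linarith
  have hC0 : 0 < C := lt_of_lt_of_le (by positivity) hC
  have hbmem : (rlo : ℝ) ∈ Set.Icc rlo rhi := ⟨le_rfl, hlt.le⟩
  have hamem : (rhi : ℝ) ∈ Set.Icc rlo rhi := ⟨hlt.le, le_rfl⟩
  have hsb : Summable (hseq (fun _ : ℕ => rlo)) := summable_hseq_const h0.le h1
  have hmb : Summable (fun j : ℕ => (j:ℝ) * hseq (fun _ : ℕ => rlo) j) :=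
    summable_mul_hseq_const h0.le h1
  have hbbpos : ∀ (l : ℕ) (r : ℝ), r ∈ Set.Icc rlo rhi →
      ∀ i, 1 ≤ i → 0 < bb rhi rlo l r i :=
    fun l r hr i hi => lt_of_lt_of_le h0 (bb_mem h0 hlt hr l i hi).1
  set Pg : ℕ → Prop := fun l => NN (bb rhi rlo l rlo) ≤ C * SS (bb rhi rlo l rlo) with hPgdef
  have hbb0 : hseq (bb rhi rlo 0 rlo) = hseq (fun _ : ℕ => rlo) :=
    hseq_eq_of (fun i hi => by
      show (if i ≤ 0 then rhi else if i = 1 then rlo else rlo) = rlo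
      rw [if_neg (by omega)]
      split_ifs <;> rfl)
  have hPg0 : Pg 0 := by
    show NN (bb rhi rlo 0 rlo) ≤ C * SS (bb rhi rlo 0 rlo)
    have e1 : NN (bb rhi rlo 0 rlo) = NN (fun _ : ℕ => rlo) := by unfold S2.NN; rw [hbb0]
    have e2 : SS (bb rhi rlo 0 rlo) = SS (fun _ : ℕ => rlo) := by unfold S2.SS; rw [hbb0]
    rw [e1, e2, NN_const h0.le h1, SS_const h0.le h1]
    have e3 : rlo / (1 - rlo) ^ 2 = (rlo / (1 - rlo)) * (1 - rlo)⁻¹ := by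
      rw [pow_two, div_mul_eq_div_div, div_eq_mul_inv (rlo / (1 - rlo))]
    rw [e3]
    exact mul_le_mul_of_nonneg_right hC (by positivity)
  by_cases hcase : ∀ l, Pg l
  · -- CASE I : constant rhi is optimal
    have ha1 : rhi < 1 := by
      by_contra hge
      push_neg at hge
      set K := Nat.floor C + 1 with hK
      have hKC : C < (K:ℝ) := by rw [hK]; push_cast; exact Nat.lt_floor_add_one C
      set Bv := (K:ℝ) * (∑ j ∈ Finset.range K, rhi ^ j) / ((K:ℝ) - C) with hBv
      set l := Nat.ceil Bv with hl
      have hmeml := bb_mem h0 hlt hbmem l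
      have hsl := summable_hseq_bb h0 h1 hlt (r := rlo) l
      have hml := summable_mul_hseq_bb h0 h1 hlt (r := rlo) l
      have hlo := moment_lower h0 hmeml hsl hml K
      have hPl : NN (bb rhi rlo l rlo) ≤ C * SS (bb rhi rlo l rlo) := hcase l
      have hKs : ((K:ℝ) - C) * SS (bb rhi rlo l rlo)
          ≤ (K:ℝ) * ∑ j ∈ Finset.range K, rhi ^ j := by
        have e : (K:ℝ) * (SS (bb rhi rlo l rlo) - ∑ j ∈ Finset.range K, rhi ^ j)
            = (K:ℝ) * SS (bb rhi rlo l rlo) - (K:ℝ) * ∑ j ∈ Finset.range K, rhi ^ j := by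
          ring
        rw [e] at hlo
        linarith [hlo, hPl]
      have hSSl : (l:ℝ) + 1 ≤ SS (bb rhi rlo l rlo) :=
        le_trans (one_le_UU hge l) (UU_le_SS_bb h0 h1 hlt l hbmem)
      have hBl : Bv ≤ (l:ℝ) := Nat.le_ceil Bv
      have hSB : SS (bb rhi rlo l rlo) ≤ Bv := by
        rw [hBv, le_div_iff₀ (by linarith : (0:ℝ) < (K:ℝ) - C)]
        linarith
      linarith
    have hsa : Summable (hseq (fun _ : ℕ => rhi)) := summable_hseq_const ha0.le ha1
    have hma := summable_mul_hseq_const ha0.le ha1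
    have hNC : NN (fun _ : ℕ => rhi) ≤ C * SS (fun _ : ℕ => rhi) := by
      have hQl : ∀ l : ℕ, QQ rhi l ≤ C * SS (fun _ : ℕ => rhi) := by
        intro l
        have hq := QQ_le_NN_bb h0 h1 hlt (r := rlo) l hbmem
        have h2 : NN (bb rhi rlo l rlo) ≤ C * SS (bb rhi rlo l rlo) := hcase l
        have h3 : SS (bb rhi rlo l rlo) ≤ SS (fun _ : ℕ => rhi) :=
          SS_mono (hbbpos l rlo hbmem) (bb_rates_le_const hlt hlt.le)
            (summable_hseq_bb h0 h1 hlt l) hsa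
        calc QQ rhi l ≤ NN (bb rhi rlo l rlo) := hq
          _ ≤ C * SS (bb rhi rlo l rlo) := h2
          _ ≤ C * SS (fun _ : ℕ => rhi) := mul_le_mul_of_nonneg_left h3 hC0.le
      exact le_of_tendsto (tendsto_QQ ha0.le ha1) (Filter.Eventually.of_forall hQl)
    refine ⟨fun _ => rhi, feasible_of h0 hlt (fun i _ => hamem) hsa hma hNC,
      ⟨⊤, rlo, hbmem, ?_⟩, ?_⟩
    · intro i hi
      refine ⟨fun _ => rfl, fun h => absurd h (by simp), fun h => absurd h not_top_lt⟩
    · intro σ hσ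
      obtain ⟨hmemσ, hsσ, hmπσ, hCσ⟩ := hσ
      have hposσ : ∀ i, 1 ≤ i → 0 < σ i := fun i hi => lt_of_lt_of_le h0 (hmemσ i hi).1
      have hle : SS σ ≤ SS (fun _ : ℕ => rhi) :=
        SS_mono hposσ (fun i hi => (hmemσ i hi).2) hsσ hsa
      rw [piseq_zero, piseq_zero]
      exact inv_anti₀ (SS_pos hposσ hsσ) hle
  · -- CASE II
    push_neg at hcase
    obtain ⟨lb, hlb⟩ := hcase
    set lstar := Nat.findGreatest Pg lb with hlstardef
    have hPstar : Pg lstar := Nat.findGreatest_spec (Nat.zero_le lb) hPg0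
    have hafter : ∀ k, lstar < k → ¬ Pg k := by
      intro k hk hPk
      rcases le_or_gt k lb with hkb | hkb
      · exact Nat.findGreatest_is_greatest hk hkb hPk
      · exact hlb (mean_le_transfer (hbbpos lb rlo hbmem) (hbbpos k rlo hbmem)
          (bb_rates_le hlt hlt.le le_rfl (Or.inl hkb))
          (summable_hseq_bb h0 h1 hlt lb) (summable_hseq_bb h0 h1 hlt k)
          (summable_mul_hseq_bb h0 h1 hlt lb) (summable_mul_hseq_bb h0 h1 hlt k) hPk)
    have hnot1 : ¬ Pg (lstar + 1) := hafter _ (Nat.lt_succ_self _)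
    have hnota : ¬ (NN (bb rhi rlo lstar rhi) ≤ C * SS (bb rhi rlo lstar rhi)) := by
      rw [bb_junction rhi rlo lstar]
      exact hnot1
    have hSb : ∀ r : ℝ, SS (bb rhi rlo lstar r) = UU rhi lstar + r * VV rhi rlo lstar :=
      SS_bb h0 h1 hlt lstar
    have hNb : ∀ r : ℝ, NN (bb rhi rlo lstar r) = QQ rhi lstar + r * WW rhi rlo lstar :=
      NN_bb h0 h1 hlt lstar
    set Q := QQ rhi lstar
    set U := UU rhi lstar
    set V := VV rhi rlo lstar
    set W := WW rhi rlo lstar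
    have hφb : Q + rlo * W ≤ C * (U + rlo * V) := by
      have hthis : NN (bb rhi rlo lstar rlo) ≤ C * SS (bb rhi rlo lstar rlo) := hPstar
      rw [hSb, hNb] at hthis
      exact hthis
    have hφa : C * (U + rhi * V) < Q + rhi * W := by
      have := not_le.mp hnota
      rw [hSb, hNb] at this
      exact this
    set β := W - C * V with hβdef
    have hβ : 0 < β := by
      have e : (rhi - rlo) * β
          = (Q + rhi * W - C * (U + rhi * V)) - (Q + rlo * W - C * (U + rlo * V)) := by
        rw [hβdef]; ring
      have h2 : 0 < (rhi - rlo) * β := by rw [e]; linarith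
      by_contra hβ'
      push_neg at hβ'
      have := mul_nonpos_of_nonneg_of_nonpos (by linarith : (0:ℝ) ≤ rhi - rlo) hβ'
      linarith
    set rstar := (C * U - Q) / β with hrstardef
    have hφr : Q + rstar * W = C * (U + rstar * V) := by
      rw [hrstardef]
      field_simp
      ring
    have hbr : rlo ≤ rstar := by
      by_contra h'
      push_neg at h'
      have e : (rlo - rstar) * β
          = (Q + rlo * W - C * (U + rlo * V)) - (Q + rstar * W - C * (U + rstar * V)) := by
        rw [hβdef]; ring
      have h2 : (rlo - rstar) * β ≤ 0 := by rw [e]; linarith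
      have h3 : 0 < (rlo - rstar) * β := mul_pos (by linarith) hβ
      linarith
    have hra : rstar < rhi := by
      by_contra h'
      push_neg at h'
      have e : (rstar - rhi) * β
          = (Q + rstar * W - C * (U + rstar * V)) - (Q + rhi * W - C * (U + rhi * V)) := by
        rw [hβdef]; ring
      have h2 : (rstar - rhi) * β < 0 := by rw [e]; linarith
      have h3 : 0 ≤ (rstar - rhi) * β := mul_nonneg (by linarith) hβ.le
      linarith
    have hrmem : rstar ∈ Set.Icc rlo rhi := ⟨hbr, hra.le⟩
    have hmemρ := bb_mem h0 hlt hrmem lstar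
    have hposρ := hbbpos lstar rstar hrmem
    have hsρ := summable_hseq_bb h0 h1 hlt (r := rstar) lstar
    have hmρ := summable_mul_hseq_bb h0 h1 hlt (r := rstar) lstar
    have hNρ : NN (bb rhi rlo lstar rstar) ≤ C * SS (bb rhi rlo lstar rstar) := by
      rw [hSb, hNb]
      exact le_of_eq hφr
    refine ⟨bb rhi rlo lstar rstar, feasible_of h0 hlt hmemρ hsρ hmρ hNρ,
      ⟨((lstar + 1 : ℕ) : ℕ∞), rstar, hrmem, ?_⟩, ?_⟩
    · intro i hi
      refine ⟨?_, ?_, ?_⟩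
      · intro h
        have hic : i < lstar + 1 := by exact_mod_cast h
        show (if i ≤ lstar then rhi else if i = lstar + 1 then rstar else rlo) = rhi
        rw [if_pos (by omega)]
      · intro h
        have hic : i = lstar + 1 := by exact_mod_cast h
        show (if i ≤ lstar then rhi else if i = lstar + 1 then rstar else rlo) = rstar
        rw [if_neg (by omega), if_pos hic]
      · intro h
        have hic : lstar + 1 < i := by exact_mod_cast h
        show (if i ≤ lstar then rhi else if i = lstar + 1 then rstar else rlo) = rlo
        rw [if_neg (by omega), if_neg (by omega)]
    · intro σ hσ
      have hσ' := hσ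
      obtain ⟨hmemσ, hsσ, hmπσ, hCσ⟩ := hσ'
      have hposσ : ∀ i, 1 ≤ i → 0 < σ i := fun i hi => lt_of_lt_of_le h0 (hmemσ i hi).1
      obtain ⟨hmσ, hNσ⟩ := feasible_elim h0 hσ
      have hSσpos := SS_pos hposσ hsσ
      rw [piseq_zero, piseq_zero]
      apply inv_anti₀ hSσpos
      by_contra hgt
      push_neg at hgt
      by_cases hex : ∃ l, SS σ < SS (bb rhi rlo l rlo)
      · set m := Nat.find hex with hmdef
        have hmspec : SS σ < SS (bb rhi rlo m rlo) := Nat.find_spec hex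
        have hm1 : 1 ≤ m := by
          by_contra hm0
          have hm0' : m = 0 := by omega
          have e2 : SS (bb rhi rlo 0 rlo) = SS (fun _ : ℕ => rlo) := by
            unfold S2.SS; rw [hbb0]
          have hbσ : SS (fun _ : ℕ => rlo) ≤ SS σ :=
            SS_mono (fun i _ => h0) (fun i hi => (hmemσ i hi).1) hsb hsσ
          rw [hm0', e2] at hmspec
          linarith
        set l0 := m - 1 with hl0def
        have hl0m : l0 + 1 = m := by omega
        have hle1 : SS (bb rhi rlo l0 rlo) ≤ SS σ := not_lt.mp (Nat.find_min hex (by omega))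
        have hlt2 : SS σ < SS (bb rhi rlo l0 rhi) := by
          rw [bb_junction rhi rlo l0, hl0m]
          exact hmspec
        have hV0 : 0 < VV rhi rlo l0 := VV_pos h0 h1 ha0 l0
        set rm := (SS σ - UU rhi l0) / (VV rhi rlo l0) with hrmdef
        have hSl0b := SS_bb (a := rhi) (b := rlo) h0 h1 hlt l0 rlo
        have hSl0a := SS_bb (a := rhi) (b := rlo) h0 h1 hlt l0 rhi
        have hbrm : rlo ≤ rm := by
          rw [hrmdef, le_div_iff₀ hV0]
          linarith
        have hrma : rm ≤ rhi := by
          rw [hrmdef, div_le_iff₀ hV0]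
          linarith
        have hrmmem : rm ∈ Set.Icc rlo rhi := ⟨hbrm, hrma⟩
        have hSmatch : SS (bb rhi rlo l0 rm) = SS σ := by
          rw [SS_bb h0 h1 hlt l0 rm, hrmdef]
          field_simp
          ring
        have hcross := crossing h0 h1 hlt hmemσ hsσ hmσ l0 hrmmem hSmatch
        have hgood : NN (bb rhi rlo l0 rm) ≤ C * SS (bb rhi rlo l0 rm) := by
          rw [hSmatch]
          exact le_trans hcross hNσ
        rcases lt_trichotomy l0 lstar with hll | hll | hll
        · have hmono := SS_mono (hbbpos l0 rm hrmmem)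
            (bb_rates_le hlt hrma hbr (Or.inl hll))
            (summable_hseq_bb h0 h1 hlt l0) hsρ
          rw [hSmatch] at hmono
          linarith
        · rcases le_or_gt rm rstar with hrr | hrr
          · have hmono := SS_mono (hbbpos l0 rm hrmmem)
              (bb_rates_le hlt hrma hbr (Or.inr ⟨hll, hrr⟩))
              (summable_hseq_bb h0 h1 hlt l0) hsρ
            rw [hSmatch] at hmono
            linarith
          · have hbad := hgood
            rw [hll] at hbad
            rw [hNb, hSb] at hbad
            have e : (rm - rstar) * β
                = (Q + rm * W - C * (U + rm * V)) - (Q + rstar * W - C * (U + rstar * V)) := by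
              rw [hβdef]; ring
            have h2 : (rm - rstar) * β ≤ 0 := by rw [e]; linarith
            have h3 : 0 < (rm - rstar) * β := mul_pos (by linarith) hβ
            linarith
        · exact hafter l0 hll (mean_le_transfer (hbbpos l0 rlo hbmem) (hbbpos l0 rm hrmmem)
            (bb_rates_le hlt hlt.le hbrm (Or.inr ⟨rfl, hbrm⟩))
            (summable_hseq_bb h0 h1 hlt l0) (summable_hseq_bb h0 h1 hlt l0)
            (summable_mul_hseq_bb h0 h1 hlt l0) (summable_mul_hseq_bb h0 h1 hlt l0) hgood)
      · push_neg at hex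
        have hUU : ∀ l : ℕ, UU rhi l ≤ SS σ :=
          fun l => le_trans (UU_le_SS_bb h0 h1 hlt l hbmem) (hex l)
        have ha1 : rhi < 1 := by
          by_contra hge
          push_neg at hge
          have hu := hUU (Nat.ceil (SS σ))
          have h2 := one_le_UU hge (Nat.ceil (SS σ))
          have h3 : SS σ ≤ (Nat.ceil (SS σ) : ℝ) := Nat.le_ceil _
          linarith
        have hsa : Summable (hseq (fun _ : ℕ => rhi)) := summable_hseq_const ha0.le ha1
        have hma := summable_mul_hseq_const ha0.le ha1
        have hga : Summable (fun n : ℕ => rhi ^ n) := summable_geometric_of_lt_one ha0.le ha1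
        have h4 : SS (fun _ : ℕ => rhi) ≤ SS σ :=
          le_of_tendsto (tendsto_UU ha0.le ha1) (Filter.Eventually.of_forall hUU)
        have h5 : SS σ ≤ SS (fun _ : ℕ => rhi) :=
          SS_mono hposσ (fun i hi => (hmemσ i hi).2) hsσ hsa
        have h6 : SS σ = SS (fun _ : ℕ => rhi) := le_antisymm h5 h4
        have hpt : ∀ n, hseq σ n = rhi ^ n := by
          have hsub : Summable (fun n : ℕ => rhi ^ n - hseq σ n) := hga.sub hsσ
          have hnn : ∀ n, 0 ≤ rhi ^ n - hseq σ n := fun n =>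
            sub_nonneg.mpr (hseq_le_pow hposσ (fun i hi => (hmemσ i hi).2) n)
          have ht0 : ∑' n : ℕ, (rhi ^ n - hseq σ n) = 0 := by
            rw [Summable.tsum_sub hga hsσ]
            have e7 : SS (fun _ : ℕ => rhi) = ∑' n : ℕ, rhi ^ n := by
              unfold S2.SS
              exact tsum_congr (hseq_const rhi)
            have e8 : SS σ = ∑' n : ℕ, hseq σ n := rfl
            rw [← e7, ← e8, h6, sub_self]
          intro n
          have hle' := Summable.le_tsum hsub n (fun m _ => hnn m)
          rw [ht0] at hle'
          have := hnn n
          linarith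
        have hNeq : NN σ = NN (fun _ : ℕ => rhi) := by
          unfold S2.NN
          exact tsum_congr fun j => by rw [hpt j, hseq_const]
        have hNCa : NN (fun _ : ℕ => rhi) ≤ C * SS (fun _ : ℕ => rhi) := by
          rw [← hNeq, ← h6]
          exact hNσ
        exact hlb (mean_le_transfer (hbbpos lb rlo hbmem) (fun i _ => ha0)
          (bb_rates_le_const hlt hlt.le)
          (summable_hseq_bb h0 h1 hlt lb) hsa
          (summable_mul_hseq_bb h0 h1 hlt lb) hma hNCa)
end

section
/- If ρ̄ < 1 and ρ̄/(1 − ρ̄) ≤ C, then the constant sequence ρ_i = ρ̄ for all i ≥ 1 is optimal for the problem of minimizing π_0 subject to ρ_i ∈ [ρ̲, ρ̄] and ∑_{i=0}^∞ i π_i ≤ C: it is feasible, and for every feasible sequence (ρ_i) with ρ_i ≤ ρ̄ for all i, one has π_0 ≥ 1 − ρ̄, with equality for the constant sequence. -/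
lemma hseq_const (r : ℝ) (i : ℕ) : hseq (fun _ => r) i = r ^ i := by
  simp [hseq, Nat.card_Icc]

/-- If `ρ̄ < 1` and `ρ̄/(1-ρ̄) ≤ C`, then the constant
sequence `ρ_i = ρ̄` is optimal for minimizing `π_0` subject to
`ρ_i ∈ [ρ̲, ρ̄]` and `∑_i i π_i ≤ C`: it is feasible (positive recurrent,
with stationary mean `ρ̄/(1-ρ̄) ≤ C`), its `π_0` equals `1 - ρ̄`,
and every feasible sequence with `ρ_i ≤ ρ̄` satisfies `π_0 ≥ 1 - ρ̄`. -/
theorem stmt5 (rlo rhi C : ℝ) (h0 : 0 < rlo) (hlt : rlo < rhi) (h1 : rhi < 1)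
    (hCpos : 0 < C) (hC : rhi / (1 - rhi) ≤ C) :
    (Summable (hseq (fun _ => rhi)) ∧
      Summable (fun i : ℕ => (i : ℝ) * piseq (fun _ => rhi) i) ∧
      (∑' i : ℕ, (i : ℝ) * piseq (fun _ => rhi) i) = rhi / (1 - rhi) ∧
      (∑' i : ℕ, (i : ℝ) * piseq (fun _ => rhi) i) ≤ C ∧
      piseq (fun _ => rhi) 0 = 1 - rhi) ∧
    ∀ ρ : ℕ → ℝ, (∀ i : ℕ, 1 ≤ i → ρ i ∈ Set.Icc rlo rhi) →
      Summable (hseq ρ) →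
      Summable (fun i : ℕ => (i : ℝ) * piseq ρ i) →
      (∑' i : ℕ, (i : ℝ) * piseq ρ i) ≤ C →
      1 - rhi ≤ piseq ρ 0 := by
  have hrpos : 0 < rhi := h0.trans hlt
  have hnorm : ‖rhi‖ < 1 := by rw [Real.norm_eq_abs, abs_of_pos hrpos]; exact h1
  have hone : (0:ℝ) < 1 - rhi := by linarith
  have hsumg : Summable (fun i : ℕ => rhi ^ i) := summable_geometric_of_lt_one hrpos.le h1
  have hsumc : Summable (hseq (fun _ => rhi)) :=
    (summable_congr (hseq_const rhi)).mpr hsumg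
  have htsum : (∑' i : ℕ, hseq (fun _ => rhi) i) = (1 - rhi)⁻¹ := by
    simp only [hseq_const]
    exact tsum_geometric_of_lt_one hrpos.le h1
  have hpi : ∀ i, piseq (fun _ => rhi) i = rhi ^ i * (1 - rhi) := by
    intro i
    rw [piseq, htsum, hseq_const]; field_simp
  have hsum2g : Summable (fun i : ℕ => (i : ℝ) * rhi ^ i) := by
    have := summable_pow_mul_geometric_of_norm_lt_one 1 hnorm (R := ℝ)
    simpa using this
  have hsum2 : Summable (fun i : ℕ => (i : ℝ) * piseq (fun _ => rhi) i) := by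
    simp only [hpi]
    have := hsum2g.mul_right (1 - rhi)
    simpa [mul_assoc] using this
  have hts2 : (∑' i : ℕ, (i : ℝ) * piseq (fun _ => rhi) i) = rhi / (1 - rhi) := by
    simp only [hpi]
    have h := tsum_coe_mul_geometric_of_norm_lt_one hnorm (𝕜 := ℝ)
    calc (∑' i : ℕ, (i : ℝ) * (rhi ^ i * (1 - rhi)))
        = (∑' i : ℕ, (i : ℝ) * rhi ^ i) * (1 - rhi) := by
          rw [← tsum_mul_right]; congr 1; ext i; ring
      _ = rhi / (1 - rhi) ^ 2 * (1 - rhi) := by rw [h]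
      _ = rhi / (1 - rhi) := by field_simp
  refine ⟨⟨hsumc, hsum2, hts2, hts2 ▸ hC, by simpa using hpi 0⟩, ?_⟩
  intro ρ hmem hsum _ _
  have hpos : ∀ j, 1 ≤ j → 0 < ρ j := fun j hj => h0.trans_le (hmem j hj).1
  have hle : ∀ i, hseq ρ i ≤ rhi ^ i := by
    intro i
    have : hseq ρ i ≤ ∏ _j ∈ Finset.Icc 1 i, rhi := by
      apply Finset.prod_le_prod
      · intro j hj
        exact (hpos j (Finset.mem_Icc.mp hj).1).le
      · intro j hj
        exact (hmem j (Finset.mem_Icc.mp hj).1).2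
    simpa [Nat.card_Icc] using this
  have hnn : ∀ i, 0 ≤ hseq ρ i := by
    intro i
    exact Finset.prod_nonneg fun j hj => (hpos j (Finset.mem_Icc.mp hj).1).le
  have hSle : (∑' i, hseq ρ i) ≤ (1 - rhi)⁻¹ := by
    calc (∑' i, hseq ρ i) ≤ ∑' i : ℕ, rhi ^ i := Summable.tsum_le_tsum hle hsum hsumg
      _ = (1 - rhi)⁻¹ := tsum_geometric_of_lt_one hrpos.le h1
  have hSge : (1:ℝ) ≤ ∑' i, hseq ρ i := by
    have := Summable.le_tsum hsum 0 (fun j _ => hnn j)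
    simpa [hseq] using this
  have hSpos : 0 < ∑' i, hseq ρ i := lt_of_lt_of_le one_pos hSge
  have h00 : hseq ρ 0 = 1 := by simp [hseq]
  rw [piseq, h00, le_div_iff₀ hSpos]
  calc (1 - rhi) * ∑' i, hseq ρ i ≤ (1 - rhi) * (1 - rhi)⁻¹ := by
        exact mul_le_mul_of_nonneg_left hSle hone.le
    _ = 1 := mul_inv_cancel₀ (ne_of_gt hone)
end

section
/- Let C > 0 and let (ρ_k)_{k≥1} be positive reals such that h_j = ∏_{k=1}^j ρ_k satisfies ∑_{j=0}^∞ (j − C) h_j = 0 with absolute convergence. Then for every i ≥ 1, (i + 1 − C) + ∑_{j≥i+2} (j − C) ∏_{k=i+2}^{j} ρ_k > 0. -/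
/-- Let `C > 0` and `(ρ_k)_{k≥1}` be positive reals such that
`h_j = ∏_{k=1}^j ρ_k` satisfies `∑_j (j - C) h_j = 0` (a convergent, hence
absolutely convergent, series of reals). Then for every `i ≥ 1`,
`(i + 1 - C) + ∑_{j ≥ i+2} (j - C) ∏_{k=i+2}^j ρ_k > 0`. -/
theorem stmt7 (C : ℝ) (hC : 0 < C) (ρ : ℕ → ℝ)
    (hρ : ∀ k : ℕ, 1 ≤ k → 0 < ρ k)
    (hsum : Summable (fun j : ℕ => ((j : ℝ) - C) * hseq ρ j))
    (hzero : (∑' j : ℕ, ((j : ℝ) - C) * hseq ρ j) = 0)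
    (i : ℕ) (hi : 1 ≤ i) :
    0 < ((i : ℝ) + 1 - C) +
      ∑' m : ℕ, (((i : ℝ) + 2 + (m : ℝ)) - C) *
        ∏ k ∈ Finset.Icc (i + 2) (i + 2 + m), ρ k := by
  set f : ℕ → ℝ := fun j => ((j : ℝ) - C) * hseq ρ j with hf
  have hpos : ∀ j, 0 < hseq ρ j := fun j =>
    Finset.prod_pos (fun k hk => hρ k (Finset.mem_Icc.mp hk).1)
  -- product identity
  have hprod : ∀ m : ℕ, ∏ k ∈ Finset.Icc (i + 2) (i + 2 + m), ρ k
      = hseq ρ (i + 2 + m) / hseq ρ (i + 1) := by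
    intro m
    rw [eq_div_iff (hpos (i+1)).ne']
    unfold hseq
    rw [show (1:ℕ) = 0 + 1 by rfl, Finset.Icc_add_one_left_eq_Ioc, Finset.Icc_add_one_left_eq_Ioc,
      show i + 2 = (i+1) + 1 by ring, Finset.Icc_add_one_left_eq_Ioc,
      mul_comm, Finset.prod_Ioc_consecutive]
    · omega
    · omega
  -- tail positivity
  have hshift : ∀ k : ℕ, Summable (fun m : ℕ => f (m + k)) := fun k =>
    (summable_nat_add_iff k).2 hsum
  have key : 0 < ∑' m : ℕ, f (m + (i + 1)) := by
    rcases lt_or_ge (i : ℝ) C with hcase | hcase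
    · -- initial terms negative
      have heq := (Summable.sum_add_tsum_nat_add (i+1) hsum)
      have hneg : ∑ j ∈ Finset.range (i + 1), f j < 0 := by
        apply Finset.sum_neg
        · intro j hj
          have hj' : (j : ℝ) < C := by
            have : j ≤ i := by simpa using Nat.lt_succ_iff.mp (Finset.mem_range.mp hj)
            exact lt_of_le_of_lt (by exact_mod_cast this) hcase
          exact mul_neg_of_neg_of_pos (by linarith) (hpos j)
        · exact ⟨0, Finset.mem_range.mpr (Nat.succ_pos i)⟩
      have : ∑' m : ℕ, f (m + (i + 1)) = -∑ j ∈ Finset.range (i + 1), f j := by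
        have := heq
        rw [hzero] at this
        linarith
      rw [this]; linarith
    · -- all tail terms positive
      apply Summable.tsum_pos (hshift (i+1))
      · intro m
        have : C < ((m + (i+1) : ℕ) : ℝ) := by
          push_cast; linarith [Nat.cast_nonneg (α := ℝ) m]
        exact le_of_lt (mul_pos (by linarith) (hpos _))
      · exact mul_pos (by push_cast; linarith [Nat.cast_nonneg (α := ℝ) 0]) (hpos _)
  -- rewrite the goal as key / h_{i+1}
  have hterm : ∀ m : ℕ, (((i : ℝ) + 2 + (m : ℝ)) - C) *
      ∏ k ∈ Finset.Icc (i + 2) (i + 2 + m), ρ k = f (m + (i + 2)) / hseq ρ (i + 1) := by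
    intro m
    rw [hprod m, hf]
    have : ((m + (i + 2) : ℕ) : ℝ) = (i : ℝ) + 2 + (m : ℝ) := by push_cast; ring
    rw [show m + (i + 2) = i + 2 + m by ring]
    push_cast
    ring
  have hgoal : ((i : ℝ) + 1 - C) +
      ∑' m : ℕ, (((i : ℝ) + 2 + (m : ℝ)) - C) *
        ∏ k ∈ Finset.Icc (i + 2) (i + 2 + m), ρ k
      = (∑' m : ℕ, f (m + (i + 1))) / hseq ρ (i + 1) := by
    have h1 : ∑' m : ℕ, f (m + (i + 1)) = f (i + 1) + ∑' m : ℕ, f (m + (i + 2)) := by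
      rw [Summable.tsum_eq_zero_add (hshift (i+1))]
      congr 1
      · simp
      · apply tsum_congr
        intro m
        congr 1
        omega
    rw [h1, add_div]
    congr 1
    · show _ = ((i+1 : ℕ) - C) * hseq ρ (i+1) / hseq ρ (i + 1)
      rw [eq_div_iff (hpos (i+1)).ne']
      push_cast
      ring
    · rw [tsum_congr hterm, tsum_div_const]
  rw [hgoal]
  exact div_pos key (hpos (i+1))
end

section
/- Let β, α, w̃ > 0 and θ ∈ (0,1]. The function p ↦ p − w̃/(β − αp)^θ, defined on {p : β − αp > 0}, attains its maximum value (β − B)/α, where B := (w̃ α θ)^{1/(θ+1)} (1 + 1/θ). Consequently, max_{p} ( p − w̃/(β − αp)^θ ) = β/α − B/α. -/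
open Real

private lemma key_min (c t : ℝ) (hc : 0 < c) (ht : 0 < t) (x : ℝ) (hx : 0 < x) :
    (c * t) ^ (1 / (t + 1)) * (1 + 1 / t) ≤ x + c * x ^ (-t) := by
  have hs : (0:ℝ) < t + 1 := by linarith
  have hxnt : 0 < x ^ (-t) := Real.rpow_pos_of_pos hx _
  have hp1 : 0 < x * (t + 1) / t := by positivity
  have hp2 : 0 < c * x ^ (-t) * (t + 1) := by positivity
  have hw : t / (t + 1) + 1 / (t + 1) = 1 := by field_simp
  have h := Real.geom_mean_le_arith_mean2_weighted
      (by positivity : (0:ℝ) ≤ t / (t + 1)) (by positivity : (0:ℝ) ≤ 1 / (t + 1))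
      hp1.le hp2.le hw
  have hL : (x * (t + 1) / t) ^ (t / (t + 1)) * (c * x ^ (-t) * (t + 1)) ^ (1 / (t + 1))
      = (c * t) ^ (1 / (t + 1)) * (1 + 1 / t) := by
    have hLpos : 0 < (x * (t + 1) / t) ^ (t / (t + 1)) *
        (c * x ^ (-t) * (t + 1)) ^ (1 / (t + 1)) := by positivity
    have hRpos : 0 < (c * t) ^ (1 / (t + 1)) * (1 + 1 / t) := by positivity
    have hlog : Real.log ((x * (t + 1) / t) ^ (t / (t + 1)) *
        (c * x ^ (-t) * (t + 1)) ^ (1 / (t + 1)))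
        = Real.log ((c * t) ^ (1 / (t + 1)) * (1 + 1 / t)) := by
      rw [Real.log_mul (by positivity) (by positivity),
          Real.log_mul (by positivity) (by positivity),
          Real.log_rpow hp1, Real.log_rpow hp2, Real.log_rpow (by positivity),
          Real.log_div (by positivity) (by positivity),
          Real.log_mul (by positivity) (by positivity),
          Real.log_mul (by positivity) (by positivity),
          Real.log_mul (by positivity) (by positivity),
          Real.log_rpow hx]
      have h1t : (1 : ℝ) + 1 / t = (t + 1) / t := by field_simp
      rw [h1t, Real.log_div (by positivity) (by positivity),
          Real.log_mul (ne_of_gt hc) (ne_of_gt ht)]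
      field_simp
      ring
    exact Real.log_injOn_pos (Set.mem_Ioi.mpr hLpos) (Set.mem_Ioi.mpr hRpos) hlog
  have hR : t / (t + 1) * (x * (t + 1) / t) + 1 / (t + 1) * (c * x ^ (-t) * (t + 1))
      = x + c * x ^ (-t) := by field_simp
  rw [hL, hR] at h
  exact h

/-- Let `β, α, w̃ > 0` and `θ ∈ (0,1]`. The function
`p ↦ p - w̃/(β - αp)^θ`, defined on `{p : β - αp > 0}`, attains its maximum
value `(β - B)/α`, where `B = (w̃ α θ)^{1/(θ+1)} (1 + 1/θ)`. Consequently,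
`max_p (p - w̃/(β - αp)^θ) = β/α - B/α`. -/
theorem stmt13 (beta alpha wt theta : ℝ)
    (hb : 0 < beta) (ha : 0 < alpha) (hw : 0 < wt)
    (htheta : theta ∈ Set.Ioc (0 : ℝ) 1)
    (B : ℝ) (hB : B = (wt * alpha * theta) ^ (1 / (theta + 1)) * (1 + 1 / theta)) :
    (∃ p : ℝ, 0 < beta - alpha * p ∧
      p - wt / ((beta - alpha * p) ^ theta) = (beta - B) / alpha ∧
      ∀ q : ℝ, 0 < beta - alpha * q →
        q - wt / ((beta - alpha * q) ^ theta) ≤ (beta - B) / alpha) ∧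
    (beta - B) / alpha = beta / alpha - B / alpha := by
  obtain ⟨ht0, ht1⟩ := htheta
  set t := theta
  set c := alpha * wt with hc
  have hc0 : 0 < c := by positivity
  have hct : wt * alpha * t = c * t := by rw [hc]; ring
  set xs : ℝ := (c * t) ^ (1 / (t + 1)) with hxs
  have hxs0 : 0 < xs := Real.rpow_pos_of_pos (by positivity) _
  have hs : (0:ℝ) < t + 1 := by linarith
  have hpow : xs ^ (t + 1) = c * t := by
    rw [hxs, ← Real.rpow_mul (by positivity)]
    rw [one_div, inv_mul_cancel₀ (ne_of_gt hs), Real.rpow_one]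
  have hBval : B = xs * (1 + 1 / t) := by rw [hB, hct, hxs]
  -- xs ^ (-t) = xs / (c * t)
  have hxsnt : xs ^ (-t) = xs / (c * t) := by
    have h1 : (-t : ℝ) = 1 - (t + 1) := by ring
    rw [h1, Real.rpow_sub hxs0, Real.rpow_one, hpow]
  -- general bound, phrased for q with x := beta - alpha * q
  have hbound : ∀ q : ℝ, 0 < beta - alpha * q →
      q - wt / ((beta - alpha * q) ^ t) ≤ (beta - B) / alpha := by
    intro q hq
    set x := beta - alpha * q with hxdef
    have hkey := key_min c t hc0 ht0 x hq
    have hxt0 : 0 < x ^ t := Real.rpow_pos_of_pos hq _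
    have hq' : q = (beta - x) / alpha := by rw [hxdef]; field_simp; ring
    have e1 : (beta - x) / alpha - wt / x ^ t =
        beta / alpha - (x + c * x ^ (-t)) / alpha := by
      rw [hc, Real.rpow_neg hq.le]; field_simp; ring
    rw [hq', e1, hBval]
    have e2 : (beta - xs * (1 + 1 / t)) / alpha
        = beta / alpha - xs * (1 + 1 / t) / alpha := by ring
    rw [e2]
    gcongr
  refine ⟨⟨(beta - xs) / alpha, ?_, ?_, hbound⟩, by ring⟩
  · have : beta - alpha * ((beta - xs) / alpha) = xs := by field_simp; ring
    rw [this]; exact hxs0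
  · have hx : beta - alpha * ((beta - xs) / alpha) = xs := by field_simp; ring
    rw [hx]
    have hxsnt' : wt / xs ^ t = xs / (alpha * t) := by
      have h1 : wt * xs ^ (-t) = xs / (alpha * t) := by
        rw [hxsnt, hc]
        field_simp
      rw [← h1, Real.rpow_neg hxs0.le]
      ring
    rw [hxsnt', hBval]
    field_simp
    ring
end

section
/- Let X be a real-valued random variable with mean m = E[X], variance σ² = Var(X) > 0, and moment generating function finite in a neighborhood of 0. For δ > 0 small enough, let τ*(δ) > 0 denote a root of the equation log E[exp(−τ X)] + τ(m − δ) = 0 with τ*(δ) → 0 as δ → 0⁺. Then lim_{δ → 0⁺} τ*(δ)/δ = 2/σ²; that is, τ*(δ) = (2δ)/σ² + o(δ) as δ → 0⁺. -/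
open MeasureTheory ProbabilityTheory Filter
open scoped ENNReal

section Aux
open Filter Real

lemma aux_exp_quad (u : ℝ) : |Real.exp u - 1 - u| ≤ u ^ 2 * Real.exp |u| := by
  rcases le_or_gt (|u|) 1 with h | h
  · calc |Real.exp u - 1 - u| ≤ u ^ 2 := Real.abs_exp_sub_one_sub_id_le h
      _ ≤ u ^ 2 * Real.exp |u| :=
        le_mul_of_one_le_right (sq_nonneg u) (Real.one_le_exp (abs_nonneg u))
  · have h1 : u + 1 ≤ Real.exp u := Real.add_one_le_exp u
    rcases le_or_gt 0 u with hu | hu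
    · rw [abs_of_nonneg (by linarith), abs_of_nonneg hu]
      have h2 : 1 - u ≤ Real.exp (-u) := by linarith [Real.add_one_le_exp (-u)]
      have h3 : Real.exp (-u) * Real.exp u = 1 := by
        rw [← Real.exp_add]; simp
      nlinarith [Real.exp_pos u, Real.exp_pos (-u)]
    · rw [abs_of_nonneg (by linarith), abs_of_neg hu]
      have h2 : Real.exp u ≤ 1 := Real.exp_le_one_iff.mpr hu.le
      have h4 : (1:ℝ) < -u := by rw [abs_of_neg hu] at h; exact h
      have h5 : (1:ℝ) ≤ Real.exp (-u) := Real.one_le_exp (by linarith)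
      nlinarith

lemma aux_squeeze {f : ℝ → ℝ} {l : Filter ℝ} {a C : ℝ} (hl : l ≤ nhds 0)
    (h : ∀ᶠ t in l, |f t - a| ≤ |t| * C) : Tendsto f l (nhds a) := by
  have h0 : Tendsto (fun t : ℝ => |t| * C) l (nhds 0) := by
    have : Tendsto (fun t : ℝ => |t| * C) (nhds 0) (nhds 0) := by
      have := (continuous_abs.tendsto (0:ℝ)).mul_const C
      simpa using this
    exact this.mono_left hl
  have h1 : Tendsto (fun t => |f t - a|) l (nhds 0) :=
    squeeze_zero' (Eventually.of_forall fun t => abs_nonneg _) h h0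
  have h2 : Tendsto (fun t => f t - a) l (nhds 0) :=
    (tendsto_zero_iff_abs_tendsto_zero (fun t => f t - a)).2 h1
  simpa using h2.add_const a

lemma aux_exp_lim (x : ℝ) :
    Tendsto (fun t : ℝ => (Real.exp (t * x) - 1 - t * x) / t ^ 2)
      (nhdsWithin 0 {0}ᶜ) (nhds (x ^ 2 / 2)) := by
  apply aux_squeeze (C := |x|^3) nhdsWithin_le_nhds
  have hmem : ∀ᶠ t : ℝ in nhdsWithin 0 {0}ᶜ, t ≠ 0 := eventually_mem_nhdsWithin
  have hsm : ∀ᶠ t : ℝ in nhdsWithin 0 {0}ᶜ, |t| < (|x| + 1)⁻¹ := by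
    apply eventually_nhdsWithin_of_eventually_nhds
    simpa using (eventually_abs_sub_lt (0:ℝ) (by positivity : (0:ℝ) < (|x|+1)⁻¹))
  filter_upwards [hmem, hsm] with t ht hts
  have hux : |t * x| ≤ 1 := by
    rw [abs_mul]
    calc |t| * |x| ≤ (|x|+1)⁻¹ * |x| :=
          mul_le_mul_of_nonneg_right hts.le (abs_nonneg x)
      _ ≤ 1 := by rw [inv_mul_le_iff₀ (by positivity)]; linarith
  have hb := Real.exp_bound hux (by norm_num : 0 < 3)
  have hsum : ∑ i ∈ Finset.range 3, (t*x) ^ i / (i.factorial : ℝ)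
      = 1 + t*x + (t*x)^2/2 := by
    simp [Finset.sum_range_succ]
  rw [hsum] at hb
  have ht2 : (0:ℝ) < t^2 := by positivity
  have key : (Real.exp (t * x) - 1 - t * x) / t ^ 2 - x ^ 2 / 2
      = (Real.exp (t*x) - (1 + t*x + (t*x)^2/2)) / t^2 := by
    field_simp; ring
  rw [key, abs_div, abs_of_pos ht2, div_le_iff₀ ht2]
  have hconst : ((3:ℕ).succ / ((3:ℕ).factorial * 3) : ℝ) ≤ 1 := by norm_num [Nat.factorial]
  calc |Real.exp (t*x) - (1 + t*x + (t*x)^2/2)|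
      ≤ |t*x|^3 * ((3:ℕ).succ / ((3:ℕ).factorial * 3)) := hb
    _ ≤ |t*x|^3 := by
        apply mul_le_of_le_one_right (by positivity) hconst
    _ = |t| * |x|^3 * t^2 := by
        rw [abs_mul, mul_pow]
        rw [show |t|^3 = |t| * |t|^2 by ring, sq_abs]
        ring



lemma aux_log_lim :
    Tendsto (fun v : ℝ => (Real.log (1 + v) - v) / v ^ 2)
      (nhdsWithin 0 {0}ᶜ) (nhds (-(1/2))) := by
  apply aux_squeeze (C := 2) nhdsWithin_le_nhds
  have hmem : ∀ᶠ v : ℝ in nhdsWithin 0 {0}ᶜ, v ≠ 0 := eventually_mem_nhdsWithin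
  have hsm : ∀ᶠ v : ℝ in nhdsWithin 0 {0}ᶜ, |v| < 1/2 := by
    apply eventually_nhdsWithin_of_eventually_nhds
    simpa using (eventually_abs_sub_lt (0:ℝ) (by norm_num : (0:ℝ) < 1/2))
  filter_upwards [hmem, hsm] with v hv hvs
  have h1 : |(-v)| < 1 := by rw [abs_neg]; linarith
  have hb := Real.abs_log_sub_add_sum_range_le h1 2
  have hsum : (∑ i ∈ Finset.range 2, (-v) ^ (i + 1) / ((i:ℝ) + 1)) = -v + v^2/2 := by
    simp [Finset.sum_range_succ]; ring
  rw [hsum, abs_neg] at hb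
  have h2 : (1:ℝ) - -v = 1 + v := by ring
  rw [h2] at hb
  have hv2 : (0:ℝ) < v^2 := by positivity
  have key : (Real.log (1 + v) - v) / v ^ 2 - (-(1/2))
      = (-v + v^2/2 + Real.log (1+v)) / v^2 := by
    field_simp; ring
  rw [key, abs_div, abs_of_pos hv2, div_le_iff₀ hv2]
  calc |(-v + v^2/2 + Real.log (1+v))| ≤ |v|^3 / (1 - |v|) := hb
    _ ≤ |v|^3 / (1/2) := by
        apply div_le_div_of_nonneg_left (by positivity) (by norm_num) (by linarith)
    _ = |v| * 2 * v^2 := by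
        rw [show |v|^3 = |v| * |v|^2 by ring, sq_abs]; ring

end Aux

/-- Let `X` be a real random variable with mean `m`,
variance `σ² > 0`, and moment generating function finite in a neighborhood of
`0`. For `δ > 0` small enough, let `τ*(δ) > 0` be a root of
`log E[exp(-τ X)] + τ (m - δ) = 0`, with `τ*(δ) → 0` as `δ → 0⁺`. Then
`lim_{δ → 0⁺} τ*(δ)/δ = 2/σ²`, i.e. `τ*(δ) = 2δ/σ² + o(δ)`. -/





theorem stmt17 {Ω : Type*} [MeasureSpace Ω] [IsProbabilityMeasure (ℙ : Measure Ω)]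
    (X : Ω → ℝ) (hX : Measurable X)
    (hmgf : ∃ c > (0 : ℝ), ∀ t : ℝ, |t| ≤ c →
      Integrable (fun ω => Real.exp (t * X ω)) ℙ)
    (m : ℝ) (hm : m = ∫ ω, X ω ∂ℙ)
    (hvar : 0 < ProbabilityTheory.variance X ℙ)
    (δ₀ : ℝ) (hδ₀ : 0 < δ₀) (τ : ℝ → ℝ)
    (hτpos : ∀ δ ∈ Set.Ioo (0 : ℝ) δ₀, 0 < τ δ)
    (hτroot : ∀ δ ∈ Set.Ioo (0 : ℝ) δ₀,
      Real.log (∫ ω, Real.exp (-(τ δ) * X ω) ∂ℙ) + τ δ * (m - δ) = 0)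
    (hτlim : Tendsto τ (nhdsWithin 0 (Set.Ioi 0)) (nhds 0)) :
    Tendsto (fun δ => τ δ / δ) (nhdsWithin 0 (Set.Ioi 0))
      (nhds (2 / ProbabilityTheory.variance X ℙ)) := by
  classical
  obtain ⟨c, hc, hint⟩ := hmgf
  set l : Filter ℝ := nhdsWithin (0:ℝ) {0}ᶜ with hl
  -- basic integrability
  have hintc : Integrable (fun ω => Real.exp (c * X ω)) ℙ :=
    hint c (le_of_eq (abs_of_pos hc))
  have hintnc : Integrable (fun ω => Real.exp (-c * X ω)) ℙ :=
    hint (-c) (by rw [abs_neg, abs_of_pos hc])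
  have hsumint : Integrable (fun ω => Real.exp (c * X ω) + Real.exp (-c * X ω)) ℙ :=
    hintc.add hintnc
  have hptw : ∀ x : ℝ, x^2 * Real.exp (c/2 * |x|)
      ≤ 16/c^2 * (Real.exp (c*x) + Real.exp (-c*x)) := by
    intro x
    have hs : (0:ℝ) ≤ c/2 * |x| := by positivity
    have hhalf := Real.add_one_le_exp (c/2 * |x| / 2)
    have hsq : Real.exp (c/2*|x|) = (Real.exp (c/2*|x|/2))^2 := by
      rw [sq, ← Real.exp_add]
      congr 1
      ring
    have h1 : (c/2*|x|)^2 ≤ 4 * Real.exp (c/2*|x|) := by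
      rw [hsq]; nlinarith [Real.exp_pos (c/2*|x|/2)]
    have h2 : x^2 ≤ 16/c^2 * Real.exp (c/2*|x|) := by
      have hx2 : (c/2*|x|)^2 = c^2/4 * x^2 := by
        rw [mul_pow, sq_abs]; ring
      rw [hx2] at h1
      rw [div_mul_eq_mul_div, le_div_iff₀ (by positivity : (0:ℝ) < c^2)]
      nlinarith
    have h3 : Real.exp (c/2*|x|) * Real.exp (c/2*|x|) = Real.exp (c*|x|) := by
      rw [← Real.exp_add]; ring_nf
    have h4 : Real.exp (c*|x|) ≤ Real.exp (c*x) + Real.exp (-c*x) := by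
      rcases abs_cases x with ⟨h,_⟩ | ⟨h,_⟩
      · rw [h]; nlinarith [Real.exp_pos (-c*x)]
      · rw [h, show c * -x = -c * x by ring]; nlinarith [Real.exp_pos (c*x)]
    calc x^2 * Real.exp (c/2*|x|) ≤ (16/c^2 * Real.exp (c/2*|x|)) * Real.exp (c/2*|x|) :=
          mul_le_mul_of_nonneg_right h2 (Real.exp_pos _).le
      _ = 16/c^2 * Real.exp (c*|x|) := by rw [mul_assoc, h3]
      _ ≤ 16/c^2 * (Real.exp (c*x) + Real.exp (-c*x)) := by
          apply mul_le_mul_of_nonneg_left h4 (by positivity)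
  have hbound_meas : Measurable (fun ω => X ω^2 * Real.exp (c/2 * |X ω|)) := by
    apply (hX.pow_const 2).mul
    exact ((hX.abs.const_mul (c/2)).exp)
  have hbound_int : Integrable (fun ω => X ω^2 * Real.exp (c/2 * |X ω|)) ℙ := by
    apply Integrable.mono' (hsumint.const_mul (16/c^2)) hbound_meas.aestronglyMeasurable
    filter_upwards with ω
    rw [Real.norm_eq_abs, abs_of_nonneg (by positivity)]
    exact hptw (X ω)
  have hX2 : Integrable (fun ω => X ω^2) ℙ := by
    apply Integrable.mono' hbound_int (hX.pow_const 2).aestronglyMeasurable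
    filter_upwards with ω
    rw [Real.norm_eq_abs, abs_of_nonneg (by positivity)]
    exact le_mul_of_one_le_right (by positivity) (Real.one_le_exp (by positivity))
  have hmem2 : MemLp X 2 ℙ := (memLp_two_iff_integrable_sq hX.aestronglyMeasurable).2 hX2
  have hXint : Integrable X ℙ :=
    memLp_one_iff_integrable.1 (hmem2.mono_exponent (by norm_num))
  set Q : ℝ := ∫ ω, X ω^2 ∂ℙ with hQ
  have hvar' : ProbabilityTheory.variance X ℙ = Q - m^2 := by
    rw [variance_eq_sub hmem2, hm]
    simp only [Pi.pow_apply]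
    rfl
  -- Step B : dominated convergence
  have hmemC : ∀ᶠ t : ℝ in l, t ≠ 0 := eventually_mem_nhdsWithin
  have hsmall : ∀ᶠ t : ℝ in l, |t| ≤ c/2 := by
    apply eventually_nhdsWithin_of_eventually_nhds
    have := eventually_abs_sub_lt (0:ℝ) (by positivity : (0:ℝ) < c/2)
    filter_upwards [this] with t ht; simpa using ht.le
  have hsmallc : ∀ᶠ t : ℝ in l, |t| ≤ c := by
    filter_upwards [hsmall] with t ht; linarith
  have hDCT : Tendsto (fun t => ∫ ω, (Real.exp (t * X ω) - 1 - t * X ω)/t^2 ∂ℙ) l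
      (nhds (∫ ω, X ω^2/2 ∂ℙ)) := by
    apply tendsto_integral_filter_of_dominated_convergence
      (bound := fun ω => X ω^2 * Real.exp (c/2 * |X ω|))
    · filter_upwards with t
      exact ((((hX.const_mul t).exp.sub measurable_const).sub
        (hX.const_mul t)).div_const _).aestronglyMeasurable
    · filter_upwards [hmemC, hsmall] with t ht0 htc
      filter_upwards with ω
      have hq := aux_exp_quad (t * X ω)
      have ht2 : (0:ℝ) < t^2 := by positivity
      rw [Real.norm_eq_abs, abs_div, abs_of_pos ht2, div_le_iff₀ ht2]
      have habs : |t * X ω| ≤ c/2 * |X ω| := by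
        rw [abs_mul]
        exact mul_le_mul_of_nonneg_right htc (abs_nonneg _)
      calc |Real.exp (t * X ω) - 1 - t * X ω| ≤ (t * X ω)^2 * Real.exp |t * X ω| := hq
        _ ≤ (t * X ω)^2 * Real.exp (c/2 * |X ω|) := by
            apply mul_le_mul_of_nonneg_left (Real.exp_le_exp.2 habs) (by positivity)
        _ = X ω^2 * Real.exp (c/2 * |X ω|) * t^2 := by ring
    · exact hbound_int
    · filter_upwards with ω
      exact aux_exp_lim (X ω)
  have hIeq : ∀ᶠ t in l, (∫ ω, (Real.exp (t * X ω) - 1 - t * X ω)/t^2 ∂ℙ)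
      = ((∫ ω, Real.exp (t * X ω) ∂ℙ) - 1 - t * m)/t^2 := by
    filter_upwards [hsmallc] with t htc
    have hA : Integrable (fun ω => Real.exp (t * X ω) - 1) ℙ := by
      exact (hint t htc).sub (integrable_const 1)
    rw [integral_div, integral_sub hA (hXint.const_mul t),
      integral_sub (hint t htc) (integrable_const 1),
      integral_const, integral_const_mul, probReal_univ, smul_eq_mul,
      one_mul, ← hm]
  have hIhalf : (∫ ω, X ω^2/2 ∂ℙ) = Q/2 := by rw [integral_div, hQ]
  have hMB : Tendsto (fun t => ((∫ ω, Real.exp (t * X ω) ∂ℙ) - 1 - t * m)/t^2) l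
      (nhds (Q/2)) := by
    rw [← hIhalf]
    exact hDCT.congr' hIeq
  -- compose with neg
  set N : ℝ → ℝ := fun t => ∫ ω, Real.exp (-t * X ω) ∂ℙ with hN
  have hneg : Tendsto (fun t : ℝ => -t) l l := by
    rw [tendsto_nhdsWithin_iff]
    constructor
    · have h1 : Tendsto (fun t:ℝ => -t) (nhds 0) (nhds 0) := by
        simpa using (continuous_neg.tendsto (0:ℝ))
      exact h1.mono_left nhdsWithin_le_nhds
    · filter_upwards [hmemC] with t ht
      simpa using ht
  have hNB : Tendsto (fun t => (N t - 1 + t * m)/t^2) l (nhds (Q/2)) := by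
    have h1 := hMB.comp hneg
    refine Tendsto.congr (fun t => ?_) h1
    show ((∫ ω, Real.exp (-t * X ω) ∂ℙ) - 1 - -t * m)/(-t)^2 = (N t - 1 + t * m)/t^2
    rw [neg_sq, neg_mul, sub_neg_eq_add]
  have htid : Tendsto (fun t : ℝ => t) l (nhds 0) := by
    have : Tendsto (id : ℝ → ℝ) (nhds 0) (nhds 0) := tendsto_id
    exact this.mono_left nhdsWithin_le_nhds
  have ht2lim : Tendsto (fun t : ℝ => t^2) l (nhds 0) := by
    simpa using (htid.pow 2)
  have htmlim : Tendsto (fun t : ℝ => t * m) l (nhds 0) := by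
    simpa using htid.mul_const m
  have hN0 : Tendsto (fun t => N t - 1) l (nhds 0) := by
    have heq : ∀ᶠ t in l, t^2 * ((N t - 1 + t*m)/t^2) - t*m = N t - 1 := by
      filter_upwards [hmemC] with t ht
      field_simp
      ring
    have h2 : Tendsto (fun t => t^2 * ((N t - 1 + t*m)/t^2) - t*m) l (nhds 0) := by
      have := (ht2lim.mul hNB).sub htmlim
      simpa using this
    exact h2.congr' heq
  have hN1 : Tendsto (fun t => (N t - 1)/t) l (nhds (-m)) := by
    have heq : ∀ᶠ t in l, t * ((N t - 1 + t*m)/t^2) - m = (N t - 1)/t := by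
      filter_upwards [hmemC] with t ht
      field_simp
      ring
    have h2 : Tendsto (fun t => t * ((N t - 1 + t*m)/t^2) - m) l (nhds (-m)) := by
      have := (htid.mul hNB).sub_const m
      simpa using this
    exact h2.congr' heq
  -- log expansion
  set g : ℝ → ℝ := fun v => if v = 0 then -(1/2) else (Real.log (1+v) - v)/v^2 with hg
  have hglim : Tendsto g (nhds 0) (nhds (-(1/2))) := by
    rw [← nhdsNE_sup_pure (0:ℝ), tendsto_sup]
    constructor
    · apply aux_log_lim.congr'
      filter_upwards [eventually_mem_nhdsWithin] with v hv
      have : v ≠ 0 := hv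
      simp [hg, this]
    · have hg0 : g 0 = -(1/2) := by simp [hg]
      rw [← hg0]
      exact tendsto_pure_nhds g 0
  have hL2 : Tendsto (fun t => (Real.log (N t) + t * m)/t^2) l
      (nhds (ProbabilityTheory.variance X ℙ / 2)) := by
    have heq : ∀ᶠ t in l,
        g (N t - 1) * ((N t - 1)/t)^2 + (N t - 1 + t*m)/t^2
        = (Real.log (N t) + t * m)/t^2 := by
      filter_upwards [hmemC] with t ht
      by_cases hv : N t - 1 = 0
      · have hNt : N t = 1 := by linarith
        rw [hv, hNt]
        simp [Real.log_one]
      · rw [hg]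
        simp only [if_neg hv]
        rw [show 1 + (N t - 1) = N t by ring]
        field_simp
        ring
    have h2 : Tendsto (fun t => g (N t - 1) * ((N t - 1)/t)^2 + (N t - 1 + t*m)/t^2) l
        (nhds (-(1/2) * (-m)^2 + Q/2)) :=
      ((hglim.comp hN0).mul (hN1.pow 2)).add hNB
    have hval : -(1/2) * (-m)^2 + Q/2 = ProbabilityTheory.variance X ℙ / 2 := by
      rw [hvar']; ring
    rw [hval] at h2
    exact h2.congr' heq
  -- step D
  have hIoo : ∀ᶠ δ in nhdsWithin (0:ℝ) (Set.Ioi 0), δ ∈ Set.Ioo (0:ℝ) δ₀ :=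
    Ioo_mem_nhdsGT_of_mem ⟨le_refl 0, hδ₀⟩
  have hτ' : Tendsto τ (nhdsWithin (0:ℝ) (Set.Ioi 0)) l := by
    rw [hl, tendsto_nhdsWithin_iff]
    refine ⟨hτlim, ?_⟩
    filter_upwards [hIoo] with δ hδ
    simpa using (ne_of_gt (hτpos δ hδ))
  have hcomp := hL2.comp hτ'
  have hfinal1 : Tendsto (fun δ => δ / τ δ) (nhdsWithin (0:ℝ) (Set.Ioi 0))
      (nhds (ProbabilityTheory.variance X ℙ / 2)) := by
    refine hcomp.congr' ?_
    filter_upwards [hIoo] with δ hδ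
    have hroot := hτroot δ hδ
    have hτp := hτpos δ hδ
    show (Real.log (N (τ δ)) + τ δ * m)/(τ δ)^2 = δ / τ δ
    have hNτ : N (τ δ) = ∫ ω, Real.exp (-(τ δ) * X ω) ∂ℙ := rfl
    have hlog : Real.log (N (τ δ)) + τ δ * m = τ δ * δ := by
      rw [hNτ]; linarith [hroot]
    rw [hlog, pow_two, mul_div_mul_left δ (τ δ) (ne_of_gt hτp)]
  have hne : ProbabilityTheory.variance X ℙ / 2 ≠ 0 := by positivity
  have h := hfinal1.inv₀ hne
  rw [inv_div] at h
  exact h.congr fun δ => by rw [inv_div]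
end
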